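/- arXiv:0801.3094 — 4 statements merged into one kernel-verified Lean document; each statement's English description precedes it below -/
import Mathlib

section
/- For ω ∈ F_n let N(ω) be the number of a ∈ {1, …, n−1} such that b̃_{a-1} = 0 and b̃_a = 0. Then for every ε > 0, the conditional probability μ( (4/18 − ε)·n < N < (4/18 + ε)·n ∣ F_n ) tends to 1 as n → ∞. -/
open MeasureTheory ProbabilityTheory Filter

/-- `μ` is the infinite product over `ℕ` of the uniform probability measure on
`{-1,0,1} ⊆ ℤ`, characterized by its values on cylinder sets.  (Taking `n = 0`
shows `μ` is a probability measure.) -/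
def IsCDGProductMeasure (μ : Measure (ℕ → ℤ)) : Prop :=
  ∀ (n : ℕ) (c : ℕ → ℤ),
    μ {ω : ℕ → ℤ | ∀ i < n, ω i = c i} =
      ∏ i ∈ Finset.range n,
        (if c i = -1 ∨ c i = 0 ∨ c i = 1 then (1 / 3 : ENNReal) else 0)

/-- `S n b = ∑_{i=0}^{n-1} 2^(n-1-i) b i`. -/
def cdgS (n : ℕ) (b : ℕ → ℤ) : ℤ := ∑ i ∈ Finset.range n, 2 ^ (n - 1 - i) * b i

/-- The standard form `b̃ a` of the sequence `b` for length `n`: the binary digit of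
`S = ∑_{i<n} 2^(n-1-i) b i` in position `n-1-a`, so that (in the "first 1" case, where
`1 ≤ S ≤ 2^n − 1`) one has `S = ∑_{a<n} 2^(n-1-a) b̃ a` with each `b̃ a ∈ {0,1}`. -/
def btilde (n : ℕ) (b : ℕ → ℤ) (a : ℕ) : ℕ := (cdgS n b).toNat / 2 ^ (n - 1 - a) % 2

/-- The "first 1" event `F_n` for length `n`: there is `j < n` with `b j = 1` and
`b k = 0` for all `k < j`. -/
def firstOne (n : ℕ) : Set (ℕ → ℤ) :=
  {b : ℕ → ℤ | ∃ j < n, b j = 1 ∧ ∀ k < j, b k = 0}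

namespace CDG10

def Dig : Finset ℤ := {-1, 0, 1}

def Box (t : ℕ) : Finset (Fin t → ℤ) := Fintype.piFinset fun _ => Dig

abbrev CState := Bool × Bool

def s0 : CState := (false, true)

def nγ (s : CState) (u : ℤ) : Bool := if u = -1 then true else if u = 0 then s.1 else false

def bitb (s : CState) (u : ℤ) : Bool := if u = 0 then s.1 else !s.1

def stp (s : CState) (u : ℤ) : CState := (nγ s u, bitb s u)

def xv (s : CState) (u : ℤ) : ℕ := if s.2 = false ∧ bitb s u = false then 1 else 0

def St : {t : ℕ} → (Fin t → ℤ) → CState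
  | 0, _ => s0
  | _+1, c => stp (St (Fin.tail c)) (c 0)

def Wf : {t : ℕ} → (Fin t → ℤ) → ℕ
  | 0, _ => 0
  | _+1, c => Wf (Fin.tail c) + xv (St (Fin.tail c)) (c 0)

def Bv : {t : ℕ} → (Fin t → ℤ) → ℕ
  | 0, _ => 0
  | t+1, c => Bv (Fin.tail c) + 2^t * (cond (bitb (St (Fin.tail c)) (c 0)) 1 0)

def bf : {t : ℕ} → (Fin t → ℤ) → ℕ → ℕ
  | 0, _, _ => 0
  | t+1, c, k => if k = t then (cond (bitb (St (Fin.tail c)) (c 0)) 1 0) else bf (Fin.tail c) k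

def flg : {t : ℕ} → (Fin t → ℤ) → Fin 3
  | 0, _ => 0
  | _+1, c => if c 0 = 0 then flg (Fin.tail c) else if c 0 = 1 then 1 else 2

def valf : {t : ℕ} → (Fin t → ℤ) → ℤ
  | 0, _ => 0
  | t+1, c => 2^t * c 0 + valf (Fin.tail c)

def hfun : CState → ℤ
  | (false, false) => 0
  | (false, true) => -3
  | (true, false) => 6
  | (true, true) => 0

def Del (s : CState) (u : ℤ) : ℤ := 9 * xv s u - 2 + hfun (stp s u) - hfun s

-- simple equation lemmas
@[simp] lemma St_succ {t : ℕ} (c : Fin (t+1) → ℤ) : St c = stp (St (Fin.tail c)) (c 0) := rfl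
@[simp] lemma Wf_succ {t : ℕ} (c : Fin (t+1) → ℤ) :
    Wf c = Wf (Fin.tail c) + xv (St (Fin.tail c)) (c 0) := rfl
@[simp] lemma Bv_succ {t : ℕ} (c : Fin (t+1) → ℤ) :
    Bv c = Bv (Fin.tail c) + 2^t * (cond (bitb (St (Fin.tail c)) (c 0)) 1 0) := rfl

lemma bf_le_one : ∀ {t : ℕ} (c : Fin t → ℤ) (k : ℕ), bf c k ≤ 1
  | 0, _, _ => Nat.zero_le 1
  | t+1, c, k => by
    show (if k = t then _ else _) ≤ 1
    split
    · cases bitb (St (Fin.tail c)) (c 0) <;> simp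
    · exact bf_le_one (Fin.tail c) k

lemma Bv_lt : ∀ {t : ℕ} (c : Fin t → ℤ), Bv c < 2^t
  | 0, _ => by simp [Bv]
  | t+1, c => by
    have h := Bv_lt (Fin.tail c)
    have : (cond (bitb (St (Fin.tail c)) (c 0)) 1 0) ≤ 1 := by
      cases bitb (St (Fin.tail c)) (c 0) <;> simp
    show Bv (Fin.tail c) + 2^t * _ < 2^(t+1)
    have h2 : 2^(t+1) = 2^t + 2^t := by ring
    have h3 : 2^t * (cond (bitb (St (Fin.tail c)) (c 0)) 1 0) ≤ 2^t := by
      cases bitb (St (Fin.tail c)) (c 0) <;> simp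
    omega

lemma ext_bit : ∀ {t : ℕ} (c : Fin t → ℤ) (k : ℕ), k < t → Bv c / 2^k % 2 = bf c k
  | 0, _, _, h => absurd h (Nat.not_lt_zero _)
  | t+1, c, k, h => by
    set β := (cond (bitb (St (Fin.tail c)) (c 0)) 1 0) with hβ
    have hβ1 : β ≤ 1 := by rw [hβ]; cases bitb (St (Fin.tail c)) (c 0) <;> simp
    rcases Nat.lt_or_ge k t with hk | hk
    · have IH := ext_bit (Fin.tail c) k hk
      show (Bv (Fin.tail c) + 2^t * β) / 2^k % 2 = _
      have hsplit : (2:ℕ)^t = 2^k * (2 * 2^(t-k-1)) := by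
        rw [← pow_succ']
        rw [← pow_add]
        congr 1
        omega
      rw [hsplit, mul_assoc, Nat.add_mul_div_left _ _ (pow_pos (by norm_num : (0:ℕ) < 2) k),
        mul_assoc, Nat.add_mul_mod_self_left, IH]
      show _ = (if k = t then β else bf (Fin.tail c) k)
      rw [if_neg (by omega)]
    · have hkt : k = t := by omega
      subst hkt
      show (Bv (Fin.tail c) + 2^k * β) / 2^k % 2 = _
      rw [Nat.add_mul_div_left _ _ (pow_pos (by norm_num : (0:ℕ) < 2) k),
        Nat.div_eq_of_lt (Bv_lt _)]
      show (0 + β) % 2 = (if k = k then β else bf (Fin.tail c) k)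
      rw [if_pos rfl]
      omega

lemma mem_Dig {u : ℤ} : u ∈ Dig ↔ u = -1 ∨ u = 0 ∨ u = 1 := by simp [Dig]

lemma mem_Box {t : ℕ} {c : Fin t → ℤ} : c ∈ Box t ↔ ∀ i, c i ∈ Dig := Fintype.mem_piFinset

/-- "first nonzero coordinate is 1" for a finite vector. -/
def Pfirst {t : ℕ} (c : Fin t → ℤ) : Prop :=
  ∃ j : Fin t, c j = 1 ∧ ∀ k : Fin t, k < j → c k = 0

instance {t : ℕ} : DecidablePred (Pfirst (t := t)) := fun _ => by
  unfold Pfirst; infer_instance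

lemma Pfirst_cons_one {t : ℕ} (c : Fin t → ℤ) : Pfirst (Fin.cons 1 c) :=
  ⟨0, by simp, fun k hk => absurd hk (Fin.not_lt_zero _)⟩

lemma Pfirst_cons_zero {t : ℕ} (c : Fin t → ℤ) : Pfirst (Fin.cons 0 c) ↔ Pfirst c := by
  constructor
  · rintro ⟨j, hj1, hj2⟩
    have hj0 : j ≠ 0 := by
      rintro rfl; simp at hj1
    obtain ⟨j', rfl⟩ := Fin.eq_succ_of_ne_zero hj0
    refine ⟨j', by simpa using hj1, fun k hk => ?_⟩
    have := hj2 k.succ (by simpa [Fin.succ_lt_succ_iff] using hk)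
    simpa using this
  · rintro ⟨j, hj1, hj2⟩
    refine ⟨j.succ, by simpa using hj1, fun k hk => ?_⟩
    induction k using Fin.cases with
    | zero => simp
    | succ k' =>
      have : k' < j := by simpa [Fin.succ_lt_succ_iff] using hk
      simpa using hj2 k' this

lemma Pfirst_cons_other {t : ℕ} (c : Fin t → ℤ) (d : ℤ) (h0 : d ≠ 0) (h1 : d ≠ 1) :
    ¬ Pfirst (Fin.cons d c) := by
  rintro ⟨j, hj1, hj2⟩
  rcases eq_or_ne j 0 with rfl | hj0
  · simp at hj1; exact h1 hj1
  · have := hj2 0 (Fin.pos_of_ne_zero hj0)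
    simp at this; exact h0 this

lemma gamma_false : ∀ {t : ℕ} (c : Fin t → ℤ), Pfirst c → (St c).1 = false
  | 0, _, h => absurd h (by rintro ⟨⟨j, hj⟩, _⟩; omega)
  | t+1, c, h => by
    rcases h with ⟨j, hj1, hj2⟩
    rcases eq_or_ne j 0 with rfl | hj0
    · show nγ _ (c 0) = false
      rw [hj1]
      simp [nγ]
    · have h00 : c 0 = 0 := hj2 0 (Fin.pos_of_ne_zero hj0)
      have htail : Pfirst (Fin.tail c) := by
        rw [← Pfirst_cons_zero (Fin.tail c), ← h00, Fin.cons_self_tail]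
        exact ⟨j, hj1, hj2⟩
      show nγ (St (Fin.tail c)) (c 0) = false
      rw [h00]
      simpa [nγ] using gamma_false (Fin.tail c) htail

lemma val_eq : ∀ {t : ℕ} (c : Fin t → ℤ), (∀ i, c i ∈ Dig) →
    valf c = (Bv c : ℤ) - 2^t * (cond (St c).1 1 0)
  | 0, _, _ => by simp [valf, Bv, St, s0]
  | t+1, c, h => by
    have IH := val_eq (Fin.tail c) (fun i => h i.succ)
    show 2^t * c 0 + valf (Fin.tail c) = _
    rw [IH]
    rw [Bv_succ]
    show _ = _ - 2^(t+1) * (cond (nγ (St (Fin.tail c)) (c 0)) 1 0)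
    rcases mem_Dig.1 (h 0) with h0 | h0 | h0 <;>
      cases hγ : (St (Fin.tail c)).1 <;>
        · simp only [h0, hγ, nγ, bitb]
          norm_num [pow_succ]
          try push_cast
          try ring

lemma St_snd {t : ℕ} (c : Fin (t+1) → ℤ) : (St c).2 = bitb (St (Fin.tail c)) (c 0) := rfl

lemma bf_top {t : ℕ} (c : Fin (t+1) → ℤ) :
    bf c t = cond (bitb (St (Fin.tail c)) (c 0)) 1 0 := by
  show (if t = t then _ else _) = _
  rw [if_pos rfl]

lemma bf_lower {t : ℕ} (c : Fin (t+1) → ℤ) (k : ℕ) (hk : k ≠ t) :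
    bf c k = bf (Fin.tail c) k := by
  show (if k = t then _ else _) = _
  rw [if_neg hk]

lemma Wf_card : ∀ {t : ℕ} (c : Fin (t+1) → ℤ),
    Wf c = ((Finset.range t).filter (fun k => bf c k = 0 ∧ bf c (k+1) = 0)).card
  | 0, c => by
    show Wf (Fin.tail c) + xv (St (Fin.tail c)) (c 0) = _
    have : St (Fin.tail c) = s0 := rfl
    simp [this, Wf, xv, s0]
  | t+1, c => by
    have IH := Wf_card (Fin.tail c)
    show Wf (Fin.tail c) + xv (St (Fin.tail c)) (c 0) = _
    rw [Finset.range_add_one, Finset.filter_insert]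
    have hmem : t ∉ (Finset.range t).filter (fun k => bf c k = 0 ∧ bf c (k+1) = 0) := by
      simp
    have hfeq : (Finset.range t).filter (fun k => bf c k = 0 ∧ bf c (k+1) = 0)
        = (Finset.range t).filter (fun k => bf (Fin.tail c) k = 0 ∧ bf (Fin.tail c) (k+1) = 0) := by
      apply Finset.filter_congr
      intro k hk
      rw [Finset.mem_range] at hk
      simp only [bf_lower c k (by omega : k ≠ t + 1), bf_lower c (k+1) (by omega : k + 1 ≠ t + 1)]
    have hxv : xv (St (Fin.tail c)) (c 0) = if bf c t = 0 ∧ bf c (t+1) = 0 then 1 else 0 := by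
      rw [bf_top c, bf_lower c t (by omega), bf_top (Fin.tail c), ← St_snd (Fin.tail c)]
      unfold xv
      cases (St (Fin.tail c)).2 <;> cases bitb (St (Fin.tail c)) (c 0) <;> simp
    split
    · rw [Finset.card_insert_of_notMem hmem, hfeq, ← IH, hxv, if_pos (by assumption)]
    · rw [hfeq, ← IH, hxv, if_neg (by assumption)]
      omega

lemma sum_Box_succ {M : Type*} [AddCommMonoid M] (t : ℕ) (f : (Fin (t+1) → ℤ) → M) :
    ∑ c ∈ Box (t+1), f c = ∑ d ∈ Dig, ∑ c ∈ Box t, f (Fin.cons d c) := by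
  rw [← Finset.sum_product']
  refine Finset.sum_nbij' (fun c => (c 0, Fin.tail c)) (fun p => Fin.cons p.1 p.2) ?_ ?_ ?_ ?_ ?_
  · intro c hc
    rw [mem_Box] at hc
    exact Finset.mem_product.2 ⟨hc 0, mem_Box.2 fun i => hc i.succ⟩
  · intro p hp
    rw [Finset.mem_product] at hp
    rw [mem_Box]
    intro i
    induction i using Fin.cases with
    | zero => simpa using hp.1
    | succ i' => simpa using mem_Box.1 hp.2 i'
  · intro c _; exact Fin.cons_self_tail c
  · intro p _; simp
  · intro c _; rw [Fin.cons_self_tail]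

def Gf {t : ℕ} (c : Fin t → ℤ) : ℤ := 9 * Wf c - 2 * t + hfun (St c) - hfun s0

lemma sum_Del : ∀ s : CState, ∑ d ∈ Dig, Del s d = 0 := by decide

lemma Del_sq : ∀ s : CState, Del s (-1) ^ 2 ≤ 64 ∧ Del s 0 ^ 2 ≤ 64 ∧ Del s 1 ^ 2 ≤ 64 := by
  decide

lemma sum_Del_sq (s : CState) : ∑ d ∈ Dig, Del s d ^ 2 ≤ 192 := by
  have h := Del_sq s
  show ∑ d ∈ ({-1, 0, 1} : Finset ℤ), Del s d ^ 2 ≤ 192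
  rw [Finset.sum_insert (by decide), Finset.sum_insert (by decide), Finset.sum_singleton]
  omega

lemma Gf_cons {t : ℕ} (d : ℤ) (c : Fin t → ℤ) :
    Gf (Fin.cons d c) = Gf c + Del (St c) d := by
  unfold Gf Del
  rw [Wf_succ, St_succ]
  simp only [Fin.tail_cons, Fin.cons_zero]
  push_cast
  ring

lemma var_bound : ∀ t : ℕ, ∑ c ∈ Box t, Gf c ^ 2 ≤ 64 * t * 3^t
  | 0 => by
    have h0 : ∀ c ∈ Box 0, Gf c ^ 2 = 0 := by
      intro c _
      have : Gf c = 0 := by unfold Gf; show 9 * (0:ℤ) - 2 * 0 + hfun s0 - hfun s0 = 0; ring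
      rw [this]; ring
    rw [Finset.sum_eq_zero h0]
    norm_num
  | t+1 => by
    have IH := var_bound t
    rw [sum_Box_succ t (fun c => Gf c ^ 2), Finset.sum_comm]
    have hstep : ∀ c ∈ Box t, ∑ d ∈ Dig, Gf (Fin.cons d c) ^ 2 ≤ 3 * Gf c ^ 2 + 192 := by
      intro c _
      have hexp : ∀ d ∈ Dig, Gf (Fin.cons d c) ^ 2
          = Gf c ^ 2 + 2 * Gf c * Del (St c) d + Del (St c) d ^ 2 := by
        intro d _; rw [Gf_cons]; ring
      rw [Finset.sum_congr rfl hexp]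
      rw [Finset.sum_add_distrib, Finset.sum_add_distrib, ← Finset.mul_sum, sum_Del,
        Finset.sum_const]
      have hcard : (Dig.card : ℤ) = 3 := by decide
      have := sum_Del_sq (St c)
      have hs : Dig.card • Gf c ^ 2 = 3 * Gf c ^ 2 := by
        rw [nsmul_eq_mul, show Dig.card = 3 from by decide]
        norm_num
      omega
    calc ∑ c ∈ Box t, ∑ d ∈ Dig, Gf (Fin.cons d c) ^ 2
        ≤ ∑ c ∈ Box t, (3 * Gf c ^ 2 + 192) := Finset.sum_le_sum hstep
      _ = 3 * (∑ c ∈ Box t, Gf c ^ 2) + 192 * (Box t).card := by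
          rw [Finset.sum_add_distrib, Finset.mul_sum, Finset.sum_const]
          push_cast
          ring
      _ ≤ 3 * (64 * t * 3^t) + 192 * 3^t := by
          have hc : (Box t).card = 3^t := by
            rw [Box, Fintype.card_piFinset_const]
            norm_num [show Dig.card = 3 from by decide]
          rw [hc]
          push_cast
          linarith [IH]
      _ ≤ 64 * (t+1) * 3^(t+1) := by
          push_cast
          rw [pow_succ]
          nlinarith [pow_pos (by norm_num : (0:ℤ) < 3) t]

def cf (t : ℕ) : ℕ := ((Box t).filter (fun c => Pfirst c)).card

lemma cf_rec : ∀ t : ℕ, 2 * cf t + 1 = 3 ^ t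
  | 0 => by
    have : cf 0 = 0 := by
      unfold cf
      rw [Finset.card_eq_zero, Finset.filter_eq_empty_iff]
      rintro c - ⟨j, -, -⟩
      exact absurd j.2 (by omega)
    rw [this]
    norm_num
  | t+1 => by
    have IH := cf_rec t
    have h1 : cf (t+1) = ∑ c ∈ Box (t+1), (if Pfirst c then 1 else 0) := by
      unfold cf
      rw [Finset.card_filter]
    rw [h1, sum_Box_succ t (fun c => if Pfirst c then 1 else 0)]
    have hDig : (Dig : Finset ℤ) = {-1, 0, 1} := rfl
    rw [hDig, Finset.sum_insert (by decide), Finset.sum_insert (by decide),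
      Finset.sum_singleton]
    have e1 : ∑ c ∈ Box t, (if Pfirst (Fin.cons (-1) c) then 1 else 0) = 0 := by
      apply Finset.sum_eq_zero
      intro c _
      rw [if_neg (Pfirst_cons_other c (-1) (by norm_num) (by norm_num))]
    have e2 : ∑ c ∈ Box t, (if Pfirst (Fin.cons 0 c) then 1 else 0) = cf t := by
      unfold cf
      rw [Finset.card_filter]
      apply Finset.sum_congr rfl
      intro c _
      by_cases h : Pfirst c
      · rw [if_pos ((Pfirst_cons_zero c).2 h), if_pos h]
      · rw [if_neg (fun hh => h ((Pfirst_cons_zero c).1 hh)), if_neg h]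
    have e3 : ∑ c ∈ Box t, (if Pfirst (Fin.cons 1 c) then 1 else 0) = 3^t := by
      have : ∀ c ∈ Box t, (if Pfirst (Fin.cons 1 c) then 1 else 0) = 1 := by
        intro c _
        rw [if_pos (Pfirst_cons_one c)]
      rw [Finset.sum_congr rfl this, Finset.sum_const, smul_eq_mul, mul_one]
      rw [Box, Fintype.card_piFinset_const]
      norm_num [show Dig.card = 3 from by decide]
    rw [e1, e2, e3]
    rw [pow_succ]
    omega

lemma hfun_diff_sq : ∀ s : CState, (hfun s - hfun s0) ^ 2 ≤ 81 := by decide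

lemma cheb (n : ℕ) (hn : 1 ≤ n) :
    ∑ c ∈ Box n, (9 * (Wf c : ℤ) - 2 * (n:ℤ)) ^ 2 ≤ 290 * (n:ℤ) * 3 ^ n := by
  have hpt : ∀ c ∈ Box n, (9 * (Wf c : ℤ) - 2 * (n:ℤ)) ^ 2 ≤ 2 * Gf c ^ 2 + 162 := by
    intro c _
    have h1 : 9 * (Wf c : ℤ) - 2 * (n:ℤ) = Gf c - (hfun (St c) - hfun s0) := by
      unfold Gf; ring
    have h2 := hfun_diff_sq (St c)
    rw [h1]
    nlinarith [sq_nonneg (Gf c + (hfun (St c) - hfun s0))]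
  calc ∑ c ∈ Box n, (9 * (Wf c : ℤ) - 2 * (n:ℤ)) ^ 2
      ≤ ∑ c ∈ Box n, (2 * Gf c ^ 2 + 162) := Finset.sum_le_sum hpt
    _ = 2 * (∑ c ∈ Box n, Gf c ^ 2) + 162 * (Box n).card := by
        rw [Finset.sum_add_distrib, Finset.mul_sum, Finset.sum_const]
        push_cast
        ring
    _ ≤ 2 * (64 * n * 3^n) + 162 * 3^n := by
        have hc : (Box n).card = 3^n := by
          rw [Box, Fintype.card_piFinset_const]
          norm_num [show Dig.card = 3 from by decide]
        rw [hc]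
        push_cast
        linarith [var_bound n]
    _ ≤ 290 * (n:ℤ) * 3 ^ n := by
        have h3 : (0:ℤ) < 3 ^ n := pow_pos (by norm_num) n
        have hn' : (1:ℤ) ≤ (n:ℤ) := by exact_mod_cast hn
        nlinarith

def bext {n : ℕ} (c : Fin n → ℤ) : ℕ → ℤ := fun i => if h : i < n then c ⟨i, h⟩ else 0

lemma valf_sum : ∀ {t : ℕ} (c : Fin t → ℤ), valf c = ∑ i : Fin t, 2 ^ (t - 1 - (i : ℕ)) * c i
  | 0, c => by simp [valf]
  | t+1, c => by
    have IH := valf_sum (Fin.tail c)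
    show 2^t * c 0 + valf (Fin.tail c) = _
    rw [IH, Fin.sum_univ_succ]
    congr 1
    apply Finset.sum_congr rfl
    intro i _
    show 2 ^ (t - 1 - (i:ℕ)) * Fin.tail c i = _
    have he : t - 1 - (i:ℕ) = t - ((i:ℕ) + 1) := by omega
    rw [he]
    rfl

lemma cdgS_bext {n : ℕ} (c : Fin n → ℤ) : cdgS n (bext c) = valf c := by
  rw [valf_sum, cdgS, ← Fin.sum_univ_eq_sum_range (fun i => 2 ^ (n - 1 - i) * bext c i) n]
  apply Finset.sum_congr rfl
  intro i _
  congr 1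
  unfold bext
  rw [dif_pos i.2]

lemma cdgS_congr {n : ℕ} (b b' : ℕ → ℤ) (h : ∀ i < n, b i = b' i) : cdgS n b = cdgS n b' := by
  unfold cdgS
  apply Finset.sum_congr rfl
  intro i hi
  rw [Finset.mem_range] at hi
  rw [h i hi]

lemma btilde_eq_bf {n : ℕ} (c : Fin n → ℤ) (hc : ∀ i, c i ∈ Dig) (hP : Pfirst c)
    (a : ℕ) (ha : a < n) : btilde n (bext c) a = bf c (n - 1 - a) := by
  have hval : cdgS n (bext c) = (Bv c : ℤ) := by
    rw [cdgS_bext, val_eq c hc, gamma_false c hP]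
    simp
  unfold btilde
  rw [hval, Int.toNat_natCast]
  exact ext_bit c (n - 1 - a) (by omega)

def Ncard (n : ℕ) (b : ℕ → ℤ) : ℕ :=
  ((Finset.Ico 1 n).filter (fun a => btilde n b (a - 1) = 0 ∧ btilde n b a = 0)).card

lemma Ncard_eq_Wf {n : ℕ} (hn : 1 ≤ n) (c : Fin n → ℤ) (hc : ∀ i, c i ∈ Dig)
    (hP : Pfirst c) : Ncard n (bext c) = Wf c := by
  obtain ⟨m, rfl⟩ : ∃ m, n = m + 1 := ⟨n - 1, by omega⟩
  unfold Ncard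
  have hfc : (Finset.Ico 1 (m+1)).filter
        (fun a => btilde (m+1) (bext c) (a - 1) = 0 ∧ btilde (m+1) (bext c) a = 0)
      = (Finset.Ico 1 (m+1)).filter (fun a => bf c (m - a + 1) = 0 ∧ bf c (m - a) = 0) := by
    apply Finset.filter_congr
    intro a ha
    rw [Finset.mem_Ico] at ha
    rw [btilde_eq_bf c hc hP (a-1) (by omega), btilde_eq_bf c hc hP a (by omega),
      show m + 1 - 1 - (a - 1) = m - a + 1 by omega, show m + 1 - 1 - a = m - a by omega]
  rw [hfc, Wf_card c]
  apply Finset.card_bij' (i := fun a _ => m - a) (j := fun k _ => m - k)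
  · intro a ha
    rw [Finset.mem_filter, Finset.mem_Ico] at ha
    rw [Finset.mem_filter, Finset.mem_range]
    refine ⟨by omega, ha.2.2, ?_⟩
    rw [show m - a + 1 = m - (a - 1) from by omega] at ha
    rw [show m - a + 1 = m - (a - 1) from by omega]
    exact ha.2.1
  · intro k hk
    rw [Finset.mem_filter, Finset.mem_range] at hk
    rw [Finset.mem_filter, Finset.mem_Ico]
    refine ⟨by omega, ?_, ?_⟩
    · rw [show m - (m - k) + 1 = k + 1 from by omega]
      exact hk.2.2
    · rw [show m - (m - k) = k from by omega]
      exact hk.2.1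
  · intro a ha
    rw [Finset.mem_filter, Finset.mem_Ico] at ha
    omega
  · intro k hk
    rw [Finset.mem_filter, Finset.mem_range] at hk
    omega

lemma meas_box (μ : MeasureTheory.Measure (ℕ → ℤ)) (hμ : IsCDGProductMeasure μ) (n : ℕ)
    (P : (Fin n → ℤ) → Prop) [DecidablePred P] :
    μ {ω : ℕ → ℤ | P (fun i => ω i)} = (((Box n).filter P).card : ENNReal) * (1/3 : ENNReal)^n := by
  classical
  set D : (Fin n → ℤ) → Set (ℕ → ℤ) := fun c => {ω | P c ∧ ∀ i : Fin n, ω i = c i} with hD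
  have hDm : ∀ c, MeasurableSet (D c) := by
    intro c
    by_cases hP : P c
    · have : D c = ⋂ i : Fin n, (fun ω : ℕ → ℤ => ω (i : ℕ)) ⁻¹' {c i} := by
        ext ω; simp [hD, hP]
      rw [this]
      exact MeasurableSet.iInter fun i => (measurable_pi_apply (i:ℕ)) (measurableSet_singleton _)
    · have : D c = ∅ := by ext ω; simp [hD, hP]
      rw [this]; exact MeasurableSet.empty
  have hcover : {ω : ℕ → ℤ | P (fun i => ω i)} = ⋃ c, D c := by
    ext ω
    simp only [Set.mem_setOf_eq, Set.mem_iUnion, hD]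
    constructor
    · intro h
      exact ⟨fun i => ω i, h, fun i => rfl⟩
    · rintro ⟨c, hPc, hc⟩
      rw [show (fun i : Fin n => ω i) = c from funext hc]
      exact hPc
  have hdisj : Pairwise (Function.onFun Disjoint D) := by
    intro c c' hne
    rw [Function.onFun, Set.disjoint_left]
    rintro ω ⟨-, h1⟩ ⟨-, h2⟩
    exact hne (funext fun i => by rw [← h1 i, ← h2 i])
  have hval : ∀ c : Fin n → ℤ,
      μ (D c) = if P c ∧ c ∈ Box n then (1/3 : ENNReal)^n else 0 := by
    intro c
    by_cases hP : P c
    · have hDc : D c = {ω : ℕ → ℤ | ∀ i < n, ω i = bext c i} := by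
        ext ω
        simp only [hD, Set.mem_setOf_eq, hP, true_and]
        constructor
        · intro h i hi
          rw [bext, dif_pos hi]
          exact h ⟨i, hi⟩
        · intro h i
          have := h (i:ℕ) i.2
          rwa [bext, dif_pos i.2] at this
      rw [hDc, hμ n (bext c)]
      by_cases hB : c ∈ Box n
      · rw [if_pos ⟨hP, hB⟩]
        have : ∀ i ∈ Finset.range n,
            (if bext c i = -1 ∨ bext c i = 0 ∨ bext c i = 1 then (1/3 : ENNReal) else 0)
              = (1/3 : ENNReal) := by
          intro i hi
          rw [Finset.mem_range] at hi
          rw [if_pos]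
          rw [bext, dif_pos hi]
          exact mem_Dig.1 (mem_Box.1 hB ⟨i, hi⟩)
        rw [Finset.prod_congr rfl this, Finset.prod_const, Finset.card_range]
      · rw [if_neg (fun h => hB h.2)]
        rw [mem_Box] at hB
        push_neg at hB
        obtain ⟨i0, hi0⟩ := hB
        apply Finset.prod_eq_zero (Finset.mem_range.2 i0.2)
        rw [bext, dif_pos i0.2]
        rw [if_neg]
        intro hcontra
        exact hi0 (mem_Dig.2 (by simpa using hcontra))
    · have : D c = ∅ := by ext ω; simp [hD, hP]
      rw [this, measure_empty, if_neg (fun h => hP h.1)]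
  rw [hcover, measure_iUnion hdisj hDm, tsum_congr hval]
  rw [tsum_eq_sum (s := (Box n).filter P)
    (by intro c hc
        rw [if_neg]
        intro hcontra
        exact hc (Finset.mem_filter.2 ⟨hcontra.2, hcontra.1⟩))]
  have : ∀ c ∈ (Box n).filter P,
      (if P c ∧ c ∈ Box n then (1/3 : ENNReal)^n else 0) = (1/3 : ENNReal)^n := by
    intro c hc
    rw [Finset.mem_filter] at hc
    rw [if_pos ⟨hc.2, hc.1⟩]
  rw [Finset.sum_congr rfl this, Finset.sum_const, nsmul_eq_mul]

lemma firstOne_repr (n : ℕ) :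
    firstOne n = {ω : ℕ → ℤ | Pfirst (fun i : Fin n => ω i)} := by
  ext ω
  constructor
  · rintro ⟨j, hj, h1, h0⟩
    exact ⟨⟨j, hj⟩, h1, fun k hk => h0 k hk⟩
  · rintro ⟨j, h1, h0⟩
    exact ⟨(j:ℕ), j.2, h1, fun k hk => h0 ⟨k, lt_trans hk j.2⟩ hk⟩

lemma measurable_firstOne (n : ℕ) : MeasurableSet (firstOne n) := by
  have : firstOne n = ⋃ (j : ℕ) (_ : j < n),
      ((fun ω : ℕ → ℤ => ω j) ⁻¹' {1} ∩ ⋂ (k : ℕ) (_ : k < j), (fun ω : ℕ → ℤ => ω k) ⁻¹' {0}) := by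
    ext ω
    simp only [Set.mem_iUnion, Set.mem_inter_iff, Set.mem_preimage, Set.mem_singleton_iff,
      Set.mem_iInter]
    show (∃ j < n, ω j = 1 ∧ ∀ k < j, ω k = 0) ↔ _
    tauto
  rw [this]
  refine MeasurableSet.iUnion fun j => MeasurableSet.iUnion fun _ => ?_
  exact ((measurable_pi_apply j) (measurableSet_singleton _)).inter
    (MeasurableSet.iInter fun k => MeasurableSet.iInter fun _ =>
      (measurable_pi_apply k) (measurableSet_singleton _))

lemma Ncard_congr (n : ℕ) (b b' : ℕ → ℤ) (h : ∀ i < n, b i = b' i) :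
    Ncard n b = Ncard n b' := by
  unfold Ncard
  congr 1
  apply Finset.filter_congr
  intro a _
  unfold btilde
  rw [cdgS_congr b b' h]

def acond (ε : ℝ) (n : ℕ) (c : Fin n → ℤ) : Prop :=
  (4 / 18 - ε) * (n : ℝ) < (Ncard n (bext c) : ℝ) ∧ (Ncard n (bext c) : ℝ) < (4 / 18 + ε) * (n : ℝ)

open Classical in
noncomputable def cg (ε : ℝ) (n : ℕ) : ℕ :=
  ((Box n).filter (fun c => Pfirst c ∧ acond ε n c)).card

open Classical in
noncomputable def cb (ε : ℝ) (n : ℕ) : ℕ :=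
  ((Box n).filter (fun c => Pfirst c ∧ ¬ acond ε n c)).card

lemma cg_add_cb (ε : ℝ) (n : ℕ) : cg ε n + cb ε n = cf n := by
  classical
  unfold cg cb cf
  have h := Finset.card_filter_add_card_filter_not
    (s := (Box n).filter (fun c => Pfirst c)) (p := fun c => acond ε n c)
  rw [Finset.filter_filter, Finset.filter_filter] at h
  convert h using 2

lemma cb_bound (ε : ℝ) (hε : 0 < ε) (n : ℕ) (hn : 1 ≤ n) :
    (cb ε n : ℝ) * (81 * ε^2 * (n:ℝ)^2) ≤ 290 * (n:ℝ) * 3^n := by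
  classical
  have hnR : (1:ℝ) ≤ (n:ℝ) := by exact_mod_cast hn
  have hpt : ∀ c ∈ (Box n).filter (fun c => Pfirst c ∧ ¬ acond ε n c),
      81 * ε^2 * (n:ℝ)^2 ≤ ((9 * (Wf c : ℤ) - 2 * (n:ℤ) : ℤ) : ℝ)^2 := by
    intro c hc
    rw [Finset.mem_filter] at hc
    obtain ⟨hBox, hPf, hnA⟩ := hc
    have hN : Ncard n (bext c) = Wf c := Ncard_eq_Wf hn c (mem_Box.1 hBox) hPf
    unfold acond at hnA
    rw [hN] at hnA
    push_cast
    set x : ℝ := (Wf c : ℝ) with hx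
    have hx0 : 0 ≤ x := by positivity
    rw [not_and_or, not_lt, not_lt] at hnA
    have h418 : (4/18 : ℝ) * 9 = 2 := by norm_num
    rcases hnA with h | h
    · have hab : 9*x - 2*(n:ℝ) + 9*ε*(n:ℝ) ≤ 0 := by nlinarith
      have ha2 : 9*x - 2*(n:ℝ) - 9*ε*(n:ℝ) ≤ 0 := by nlinarith
      nlinarith [mul_nonneg (neg_nonneg.2 hab) (neg_nonneg.2 ha2)]
    · have hab : 0 ≤ 9*x - 2*(n:ℝ) + 9*ε*(n:ℝ) := by nlinarith
      have ha2 : 0 ≤ 9*x - 2*(n:ℝ) - 9*ε*(n:ℝ) := by nlinarith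
      nlinarith [mul_nonneg hab ha2]
  have hsum : ((Box n).filter (fun c => Pfirst c ∧ ¬ acond ε n c)).card •
        (81 * ε^2 * (n:ℝ)^2)
      ≤ ∑ c ∈ (Box n).filter (fun c => Pfirst c ∧ ¬ acond ε n c),
          ((9 * (Wf c : ℤ) - 2 * (n:ℤ) : ℤ) : ℝ)^2 :=
    Finset.card_nsmul_le_sum _ _ _ hpt
  have hsub : ∑ c ∈ (Box n).filter (fun c => Pfirst c ∧ ¬ acond ε n c),
        ((9 * (Wf c : ℤ) - 2 * (n:ℤ) : ℤ) : ℝ)^2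
      ≤ ∑ c ∈ Box n, ((9 * (Wf c : ℤ) - 2 * (n:ℤ) : ℤ) : ℝ)^2 :=
    Finset.sum_le_sum_of_subset_of_nonneg (Finset.filter_subset _ _)
      (fun c _ _ => by positivity)
  have hcheb : ∑ c ∈ Box n, ((9 * (Wf c : ℤ) - 2 * (n:ℤ) : ℤ) : ℝ)^2 ≤ 290 * (n:ℝ) * 3^n := by
    have h := cheb n hn
    calc ∑ c ∈ Box n, ((9 * (Wf c : ℤ) - 2 * (n:ℤ) : ℤ) : ℝ)^2
        = ((∑ c ∈ Box n, (9 * (Wf c : ℤ) - 2 * (n:ℤ))^2 : ℤ) : ℝ) := by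
          push_cast
          rfl
      _ ≤ ((290 * (n:ℤ) * 3^n : ℤ) : ℝ) := by exact_mod_cast h
      _ = 290 * (n:ℝ) * 3^n := by push_cast; ring
  have : (cb ε n : ℝ) * (81 * ε^2 * (n:ℝ)^2)
      = ((Box n).filter (fun c => Pfirst c ∧ ¬ acond ε n c)).card • (81 * ε^2 * (n:ℝ)^2) := by
    rw [nsmul_eq_mul]
    unfold cb
    norm_num
  rw [this]
  exact le_trans hsum (le_trans hsub hcheb)

lemma cf_pos (n : ℕ) (hn : 1 ≤ n) : 1 ≤ cf n := by
  have h := cf_rec n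
  have h3 : 3 ≤ 3^n := by
    calc 3 = 3^1 := by norm_num
    _ ≤ 3^n := Nat.pow_le_pow_right (by norm_num) hn
  omega

end CDG10

open CDG10

/-- with `N(ω)` the number of `a ∈ {1,…,n−1}` with `b̃_{a-1} = 0` and `b̃_a = 0`, for every `ε > 0` the conditional probability `μ((4/18 − ε)n < N < (4/18 + ε)n ∣ F_n) → 1` as `n → ∞`. -/
theorem stmt_10 (μ : Measure (ℕ → ℤ)) (hμ : IsCDGProductMeasure μ) (ε : ℝ) (hε : 0 < ε) :
    Tendsto (fun n : ℕ =>
      μ[|firstOne n] {ω : ℕ → ℤ |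
        (4 / 18 - ε) * n <
          (((Finset.Ico 1 n).filter (fun a =>
            btilde n ω (a - 1) = 0 ∧ btilde n ω a = 0)).card : ℝ) ∧
        (((Finset.Ico 1 n).filter (fun a =>
            btilde n ω (a - 1) = 0 ∧ btilde n ω a = 0)).card : ℝ) <
          (4 / 18 + ε) * n})
      atTop (nhds 1) := by
  classical
  have hlim : Tendsto (fun n : ℕ => (cg ε n : ℝ) / (cf n)) atTop (nhds 1) := by
    apply tendsto_of_tendsto_of_tendsto_of_le_of_le'
      (g := fun n : ℕ => 1 - (11 / ε ^ 2) / (n : ℝ)) (h := fun _ : ℕ => (1 : ℝ))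
    · have h0 : Tendsto (fun n : ℕ => (11 / ε ^ 2) / (n : ℝ)) atTop (nhds 0) :=
        tendsto_const_div_atTop_nhds_zero_nat _
      have h1 := (tendsto_const_nhds (x := (1 : ℝ)) (f := (atTop : Filter ℕ))).sub h0
      simpa using h1
    · exact tendsto_const_nhds
    · filter_upwards [eventually_ge_atTop 1] with n hn
      have hcf1 : 1 ≤ cf n := cf_pos n hn
      have hcfR : (0 : ℝ) < (cf n : ℝ) := by exact_mod_cast hcf1
      have hcfR1 : (1 : ℝ) ≤ (cf n : ℝ) := by exact_mod_cast hcf1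
      have hnR : (1 : ℝ) ≤ (n : ℝ) := by exact_mod_cast hn
      have hnR0 : (0 : ℝ) < (n : ℝ) := by linarith
      have hbb := cb_bound ε hε n hn
      have h3cf : (3 : ℝ) ^ n ≤ 3 * (cf n : ℝ) := by
        have hrec : ((3 : ℕ) ^ n : ℝ) = 2 * (cf n : ℝ) + 1 := by
          exact_mod_cast congrArg (fun k : ℕ => (k : ℝ)) (cf_rec n).symm
        push_cast at hrec
        rw [hrec]
        linarith
      have e1 : (cb ε n : ℝ) * (81 * ε ^ 2 * (n : ℝ) ^ 2) ≤ 870 * (n : ℝ) * (cf n : ℝ) := by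
        calc (cb ε n : ℝ) * (81 * ε ^ 2 * (n : ℝ) ^ 2) ≤ 290 * (n : ℝ) * 3 ^ n := hbb
          _ ≤ 290 * (n : ℝ) * (3 * (cf n : ℝ)) := by nlinarith
          _ = 870 * (n : ℝ) * (cf n : ℝ) := by ring
      have e2 : (cb ε n : ℝ) * (ε ^ 2 * (n : ℝ)) ≤ 11 * (cf n : ℝ) := by
        have h81 : (0 : ℝ) < 81 * (n : ℝ) := by linarith
        apply le_of_mul_le_mul_left _ h81
        calc (81 * (n : ℝ)) * ((cb ε n : ℝ) * (ε ^ 2 * (n : ℝ)))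
            = (cb ε n : ℝ) * (81 * ε ^ 2 * (n : ℝ) ^ 2) := by ring
          _ ≤ 870 * (n : ℝ) * (cf n : ℝ) := e1
          _ ≤ (81 * (n : ℝ)) * (11 * (cf n : ℝ)) := by nlinarith
      have hsplit : (cg ε n : ℝ) = (cf n : ℝ) - (cb ε n : ℝ) := by
        have hadd : (cg ε n : ℝ) + (cb ε n : ℝ) = (cf n : ℝ) := by
          exact_mod_cast congrArg (fun k : ℕ => (k : ℝ)) (cg_add_cb ε n)
        linarith
      rw [hsplit, sub_div, div_self (ne_of_gt hcfR), div_div]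
      have hdf : (cb ε n : ℝ) / (cf n : ℝ) ≤ 11 / (ε ^ 2 * (n : ℝ)) := by
        rw [div_le_div_iff₀ hcfR (by positivity)]
        exact e2
      linarith
    · filter_upwards [eventually_ge_atTop 1] with n hn
      have hcf1 : 1 ≤ cf n := cf_pos n hn
      have hcfR : (0 : ℝ) < (cf n : ℝ) := by exact_mod_cast hcf1
      rw [div_le_one hcfR]
      have hadd := cg_add_cb ε n
      have h2 : cg ε n ≤ cf n := by omega
      exact_mod_cast h2
  have hof : Tendsto (fun n : ℕ => ENNReal.ofReal ((cg ε n : ℝ) / (cf n))) atTop (nhds 1) := by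
    have h1 := ENNReal.tendsto_ofReal hlim
    simpa using h1
  refine Tendsto.congr' ?_ hof
  filter_upwards [eventually_ge_atTop 1] with n hn
  set As : Set (ℕ → ℤ) := {ω : ℕ → ℤ |
        (4 / 18 - ε) * n <
          (((Finset.Ico 1 n).filter (fun a =>
            btilde n ω (a - 1) = 0 ∧ btilde n ω a = 0)).card : ℝ) ∧
        (((Finset.Ico 1 n).filter (fun a =>
            btilde n ω (a - 1) = 0 ∧ btilde n ω a = 0)).card : ℝ) <
          (4 / 18 + ε) * n} with hAs
  have hcf1 : 1 ≤ cf n := cf_pos n hn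
  have hcfR : (0 : ℝ) < (cf n : ℝ) := by exact_mod_cast hcf1
  have hFA : firstOne n ∩ As = {ω : ℕ → ℤ |
      (fun c : Fin n → ℤ => Pfirst c ∧ acond ε n c) (fun i : Fin n => ω i)} := by
    ext ω
    have hN : Ncard n ω = Ncard n (bext (fun i : Fin n => ω i)) :=
      Ncard_congr n _ _ (fun i hi => by rw [bext, dif_pos hi])
    simp only [Set.mem_inter_iff, Set.mem_setOf_eq, hAs]
    constructor
    · rintro ⟨hF, hA⟩
      rw [firstOne_repr n] at hF
      refine ⟨hF, ?_⟩
      unfold acond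
      rw [← hN]
      exact hA
    · rintro ⟨hF, hA⟩
      rw [firstOne_repr n]
      refine ⟨hF, ?_⟩
      unfold acond at hA
      rw [← hN] at hA
      exact hA
  have hμF : μ (firstOne n) = (cf n : ENNReal) * (1 / 3 : ENNReal) ^ n := by
    rw [firstOne_repr n]
    exact meas_box μ hμ n (fun c => Pfirst c)
  have hμFA : μ (firstOne n ∩ As) = (cg ε n : ENNReal) * (1 / 3 : ENNReal) ^ n := by
    rw [hFA]
    exact meas_box μ hμ n (fun c => Pfirst c ∧ acond ε n c)
  have hq0 : ((1 : ENNReal) / 3) ^ n ≠ 0 := by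
    apply pow_ne_zero
    simp
  have hqt : ((1 : ENNReal) / 3) ^ n ≠ ⊤ := by
    apply ENNReal.pow_ne_top
    simp
  have hcf0 : (cf n : ENNReal) ≠ 0 := Nat.cast_ne_zero.mpr (by omega)
  have hcft : (cf n : ENNReal) ≠ ⊤ := ENNReal.natCast_ne_top _
  have hc : μ[|firstOne n] As = (cg ε n : ENNReal) / (cf n : ENNReal) := by
    rw [ProbabilityTheory.cond_apply (measurable_firstOne n) μ As, hμF, hμFA]
    rw [ENNReal.mul_inv (Or.inl hcf0) (Or.inl hcft)]
    rw [show (cf n : ENNReal)⁻¹ * (((1 : ENNReal) / 3) ^ n)⁻¹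
          * ((cg ε n : ENNReal) * ((1 : ENNReal) / 3) ^ n)
        = (((1 : ENNReal) / 3) ^ n)⁻¹ * ((1 : ENNReal) / 3) ^ n
          * ((cg ε n : ENNReal) * (cf n : ENNReal)⁻¹) from by ring]
    rw [ENNReal.inv_mul_cancel hq0 hqt, one_mul, ← div_eq_mul_inv]
  rw [hc, ENNReal.ofReal_div_of_pos hcfR, ENNReal.ofReal_natCast, ENNReal.ofReal_natCast]
end

section
/- For ω ∈ F_n let N(ω) be the number of a ∈ {1, …, n−1} such that b̃_{a-1} = 0 and b̃_a = 1. Then for every ε > 0, the conditional probability μ( (5/18 − ε)·n < N < (5/18 + ε)·n ∣ F_n ) tends to 1 as n → ∞. -/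
open MeasureTheory ProbabilityTheory Filter

namespace CDG

/-- state: (borrow, previous digit) -/
abbrev St := Bool × Bool

def dOut : Bool → Fin 3 → Bool
  | false, j => j != 1
  | true, j => j == 1

def bOut : Bool → Fin 3 → Bool
  | false, j => j == 0
  | true, j => j != 2

def step (s : St) (j : Fin 3) : St := (bOut s.1 j, dOut s.1 j)

def outN (s : St) (j : Fin 3) : ℕ := (s.2 && !(dOut s.1 j)).toNat

def sInit : St := (false, false)

def cnt : St → (ℕ → Fin 3) → ℕ → ℕ
  | _, _, 0 => 0
  | s, u, (n+1) => outN s (u 0) + cnt (step s (u 0)) (fun i => u (i+1)) n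

def ext {n : ℕ} (v : Fin n → Fin 3) : ℕ → Fin 3 :=
  fun i => if h : i < n then v ⟨i, h⟩ else 0

lemma ext_cons_zero {n : ℕ} (j : Fin 3) (v : Fin n → Fin 3) :
    ext (Fin.cons j v) 0 = j := by
  simp only [ext, Nat.zero_lt_succ, dif_pos]
  exact Fin.cons_zero (α := fun _ => Fin 3) j v

lemma ext_cons_succ {n : ℕ} (j : Fin 3) (v : Fin n → Fin 3) :
    (fun i => ext (Fin.cons j v) (i+1)) = ext v := by
  funext i
  by_cases h : i < n
  · have h' : i + 1 < n + 1 := by omega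
    simp only [ext, dif_pos h, dif_pos h']
    exact Fin.cons_succ (α := fun _ => Fin 3) j v ⟨i, h⟩
  · have h' : ¬ (i + 1 < n + 1) := by omega
    simp only [ext, dif_neg h, dif_neg h']

lemma cnt_ext_cons {n : ℕ} (s : St) (j : Fin 3) (v : Fin n → Fin 3) :
    cnt s (ext (Fin.cons j v)) (n+1) = outN s j + cnt (step s j) (ext v) n := by
  rw [show cnt s (ext (Fin.cons j v)) (n+1)
      = outN s (ext (Fin.cons j v) 0)
        + cnt (step s (ext (Fin.cons j v) 0)) (fun i => ext (Fin.cons j v) (i+1)) n from rfl,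
    ext_cons_zero, ext_cons_succ]

lemma sum_pi_succ {M : Type*} [AddCommMonoid M] {n : ℕ} (f : (Fin (n+1) → Fin 3) → M) :
    ∑ w : Fin (n+1) → Fin 3, f w = ∑ j : Fin 3, ∑ v : Fin n → Fin 3, f (Fin.cons j v) := by
  rw [← (Fintype.sum_equiv (Fin.consEquiv fun _ => Fin 3) _ f (fun q => rfl)),
    Fintype.sum_prod_type]
  rfl

noncomputable def Sm (n : ℕ) (s : St) : ℝ := ∑ v : Fin n → Fin 3, (cnt s (ext v) n : ℝ)

noncomputable def Qm (n : ℕ) (s : St) : ℝ := ∑ v : Fin n → Fin 3, (cnt s (ext v) n : ℝ)^2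

lemma card_fun3 (n : ℕ) : (Fintype.card (Fin n → Fin 3) : ℝ) = 3^n := by
  simp [Fintype.card_fun]

lemma Sm_zero (s : St) : Sm 0 s = 0 := by
  simp [Sm, cnt]

lemma Qm_zero (s : St) : Qm 0 s = 0 := by
  simp [Qm, cnt]

lemma Sm_succ (n : ℕ) (s : St) :
    Sm (n+1) s = ∑ j : Fin 3, ((outN s j : ℝ) * 3^n + Sm n (step s j)) := by
  unfold Sm
  rw [sum_pi_succ]
  refine Finset.sum_congr rfl fun j _ => ?_
  simp only [cnt_ext_cons, Nat.cast_add, Finset.sum_add_distrib, Finset.sum_const,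
    Finset.card_univ, nsmul_eq_mul]
  rw [card_fun3]
  ring

lemma Qm_succ (n : ℕ) (s : St) :
    Qm (n+1) s = ∑ j : Fin 3, ((outN s j : ℝ)^2 * 3^n + 2 * outN s j * Sm n (step s j)
      + Qm n (step s j)) := by
  unfold Qm
  rw [sum_pi_succ]
  refine Finset.sum_congr rfl fun j _ => ?_
  have : ∀ v : Fin n → Fin 3, ((cnt s (ext (Fin.cons j v)) (n+1) : ℝ))^2
      = (outN s j : ℝ)^2 + 2 * outN s j * (cnt (step s j) (ext v) n : ℝ)
        + (cnt (step s j) (ext v) n : ℝ)^2 := by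
    intro v
    rw [cnt_ext_cons]
    push_cast
    ring
  simp only [this, Finset.sum_add_distrib, Finset.sum_const, Finset.card_univ, nsmul_eq_mul]
  rw [card_fun3]
  have h2 : ∑ x : Fin n → Fin 3, 2 * (outN s j : ℝ) * (cnt (step s j) (ext x) n : ℝ)
      = 2 * (outN s j : ℝ) * (∑ x : Fin n → Fin 3, (cnt (step s j) (ext x) n : ℝ)) := by
    rw [Finset.mul_sum]
  rw [h2]
  unfold Sm
  ring


noncomputable def smF (t : ℕ) : St → ℝ
  | (false, false) => 5/18*t*3^t - 7/36*3^t - 1/4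
  | (false, true)  => 5/18*t*3^t + 5/36*3^t - 1/4
  | (true, false)  => 5/18*t*3^t - 13/36*3^t + 1/4
  | (true, true)   => 5/18*t*3^t + 11/36*3^t + 1/4

noncomputable def qF (t : ℕ) : St → ℝ
  | (false, false) => 25/324*t^2*3^t - 17/324*t*3^t + 19/216*3^t - 1/4*t + 7/8
  | (false, true)  => 25/324*t^2*3^t + 43/324*t*3^t + 23/216*3^t - 1/4*t + 3/8
  | (true, false)  => 25/324*t^2*3^t - 47/324*t*3^t + 47/216*3^t + 1/4*t - 5/8
  | (true, true)   => 25/324*t^2*3^t + 73/324*t*3^t + 31/216*3^t + 1/4*t - 5/8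

lemma Sm_one (s : St) : Sm 1 s = smF 1 s := by
  rcases s with ⟨c, p⟩
  cases c <;> cases p <;>
    simp [Sm_succ, Sm_zero, Fin.sum_univ_three, outN, step, dOut, bOut, smF] <;> norm_num

lemma smF_correct : ∀ t, 1 ≤ t → ∀ s, Sm t s = smF t s := by
  intro t ht
  induction t, ht using Nat.le_induction with
  | base => exact Sm_one
  | succ t ht ih =>
    intro s
    rw [Sm_succ]
    rcases s with ⟨c, p⟩
    cases c <;> cases p <;>
      · simp [Fin.sum_univ_three, outN, step, dOut, bOut, ih]
        simp only [smF]
        push_cast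
        simp only [pow_succ]
        ring

lemma Qm_one (s : St) : Qm 1 s = Sm 1 s := by
  rcases s with ⟨c, p⟩
  cases c <;> cases p <;>
    simp [Qm_succ, Qm_zero, Sm_zero, Sm_succ, Fin.sum_univ_three, outN, step, dOut, bOut] <;>
    norm_num

lemma Qm_two (s : St) : Qm 2 s = qF 2 s := by
  have h1 : ∀ s' : St, Qm 1 s' = Sm 1 s' := Qm_one
  rcases s with ⟨c, p⟩
  cases c <;> cases p <;>
    · rw [Qm_succ]
      simp only [Fin.sum_univ_three, outN, step, dOut, bOut, h1, Sm_one]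
      simp [smF, qF]
      norm_num

lemma qF_correct : ∀ t, 2 ≤ t → ∀ s, Qm t s = qF t s := by
  intro t ht
  induction t, ht using Nat.le_induction with
  | base => exact Qm_two
  | succ t ht ih =>
    intro s
    have ht1 : 1 ≤ t := by omega
    rw [Qm_succ]
    rcases s with ⟨c, p⟩
    cases c <;> cases p <;>
      · simp [Fin.sum_univ_three, outN, step, dOut, bOut, ih, smF_correct t ht1]
        simp only [smF, qF]
        push_cast
        simp only [pow_succ]
        ring

lemma var_bound {n : ℕ} (hn : 2 ≤ n) :
    ∑ v : Fin n → Fin 3, ((cnt sInit (ext v) n : ℝ) - 5/18*n)^2 ≤ (n:ℝ) * 3^n := by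
  have hexp : ∑ v : Fin n → Fin 3, ((cnt sInit (ext v) n : ℝ) - 5/18*n)^2
      = Qm n sInit - 2*(5/18*n)*Sm n sInit + (5/18*n)^2 * 3^n := by
    unfold Qm Sm
    rw [← card_fun3]
    simp only [sub_sq, Finset.sum_add_distrib, Finset.sum_sub_distrib, Finset.sum_const,
      Finset.card_univ, nsmul_eq_mul]
    have e1 : ∑ x : Fin n → Fin 3, (2:ℝ) * (cnt sInit (ext x) n : ℝ) * (5/18*(n:ℝ))
        = 2*(5/18*(n:ℝ)) * ∑ x : Fin n → Fin 3, (cnt sInit (ext x) n : ℝ) := by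
      rw [Finset.mul_sum]
      exact Finset.sum_congr rfl (fun x _ => by ring)
    rw [e1]
    ring
  rw [hexp, qF_correct n hn sInit, smF_correct n (by omega) sInit]
  simp only [sInit, qF, smF]
  have h3 : (9:ℝ) ≤ 3^n := by
    calc (9:ℝ) = 3^2 := by norm_num
    _ ≤ 3^n := by
      apply pow_le_pow_right₀ (by norm_num) hn
  have hn' : (2:ℝ) ≤ n := by exact_mod_cast hn
  nlinarith [sq_nonneg ((n:ℝ)), mul_le_mul_of_nonneg_left h3 (le_of_lt (by positivity : (0:ℝ) < (n:ℝ)))]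


/-! ### Bridge: automaton digits are the binary digits of `S` -/

def val3 (j : Fin 3) : ℤ := (j : ℤ) - 1

def enc (z : ℤ) : Fin 3 := if z = -1 then 0 else if z = 0 then 1 else 2

def cv (c : Bool) : ℤ := if c then -1 else 0

def dv (d : Bool) : ℤ := if d then 1 else 0

lemma val3_enc {z : ℤ} (hz : z = -1 ∨ z = 0 ∨ z = 1) : val3 (enc z) = z := by
  rcases hz with h | h | h <;> subst h <;> decide

lemma enc_val3 : ∀ j : Fin 3, enc (val3 j) = j := by decide

def stRun (s : St) (u : ℕ → Fin 3) : ℕ → St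
  | 0 => s
  | (t+1) => step (stRun s u t) (u t)

lemma stRun_shift (s : St) (u : ℕ → Fin 3) (t : ℕ) :
    stRun s u (t+1) = stRun (step s (u 0)) (fun i => u (i+1)) t := by
  induction t with
  | zero => rfl
  | succ t ih =>
    show step (stRun s u (t+1)) (u (t+1)) = _
    rw [ih]
    rfl

lemma cnt_eq_sum (n : ℕ) (s : St) (u : ℕ → Fin 3) :
    cnt s u n = ∑ t ∈ Finset.range n, outN (stRun s u t) (u t) := by
  induction n generalizing s u with
  | zero => rfl
  | succ n ih =>
    rw [Finset.sum_range_succ']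
    show outN s (u 0) + cnt (step s (u 0)) (fun i => u (i+1)) n = _
    rw [ih]
    have hsh : ∀ t, stRun s u (t+1) = stRun (step s (u 0)) (fun i => u (i+1)) t :=
      stRun_shift s u
    have : ∑ t ∈ Finset.range n, outN (stRun s u (t+1)) (u (t+1))
        = ∑ t ∈ Finset.range n, outN (stRun (step s (u 0)) (fun i => u (i+1)) t) (u (t+1)) :=
      Finset.sum_congr rfl fun t _ => by rw [hsh t]
    rw [← this]
    exact (add_comm _ _)

lemma cnt_congr {n : ℕ} {u u' : ℕ → Fin 3} (s : St) (h : ∀ t < n, u t = u' t) :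
    cnt s u n = cnt s u' n := by
  induction n generalizing s u u' with
  | zero => rfl
  | succ n ih =>
    show outN s (u 0) + _ = outN s (u' 0) + _
    rw [h 0 (by omega)]
    congr 1
    exact ih _ (fun t ht => h (t+1) (by omega))

lemma step_val : ∀ (c : Bool) (j : Fin 3),
    val3 j + cv c = dv (dOut c j) + 2 * cv (bOut c j) := by decide

lemma dv_toNat (d : Bool) : dv d = (d.toNat : ℤ) := by cases d <;> rfl

/-- The binary digit emitted at step `t` when running the automaton from `sInit` on `u`. -/
def dig (u : ℕ → Fin 3) (t : ℕ) : Bool := dOut ((stRun sInit u t).1) (u t)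

lemma invariant (u : ℕ → Fin 3) (T : ℕ) :
    ∑ t ∈ Finset.range T, 2^t * val3 (u t) =
      ∑ t ∈ Finset.range T, 2^t * dv (dig u t) + 2^T * cv ((stRun sInit u T).1) := by
  induction T with
  | zero => simp [stRun, sInit, cv]
  | succ T ih =>
    rw [Finset.sum_range_succ, Finset.sum_range_succ, ih]
    have hst : (stRun sInit u (T+1)).1 = bOut ((stRun sInit u T).1) (u T) := rfl
    have hkey := step_val ((stRun sInit u T).1) (u T)
    rw [hst]
    unfold dig
    linear_combination (2:ℤ)^T * hkey

lemma int_geo (m : ℕ) : ∑ i ∈ Finset.range m, (2:ℤ)^i = 2^m - 1 := by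
  induction m with
  | zero => simp
  | succ m ih => rw [Finset.sum_range_succ, ih]; ring

lemma nat_geo (m : ℕ) : ∑ i ∈ Finset.range m, 2^i = 2^m - 1 := by
  induction m with
  | zero => simp
  | succ m ih =>
    rw [Finset.sum_range_succ, ih, pow_succ]
    have : 1 ≤ 2^m := Nat.one_le_two_pow
    omega


lemma extract (g : ℕ → ℕ) (hg : ∀ t, g t ≤ 1) {k n : ℕ} (hk : k < n) :
    (∑ t ∈ Finset.range n, 2^t * g t) / 2^k % 2 = g k := by
  have hsplit : ∑ t ∈ Finset.range n, 2^t * g t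
      = (∑ t ∈ Finset.range k, 2^t * g t) + 2^k * g k
        + ∑ i ∈ Finset.Ico (k+1) n, 2^i * g i := by
    rw [Finset.range_eq_Ico, ← Finset.sum_Ico_consecutive _ (Nat.zero_le (k+1)) hk,
      Finset.sum_Ico_succ_top (Nat.zero_le k), ← Finset.range_eq_Ico]
  have hhigh : ∑ i ∈ Finset.Ico (k+1) n, 2^i * g i
      = 2^(k+1) * ∑ i ∈ Finset.range (n-(k+1)), 2^i * g (k+1+i) := by
    rw [Finset.sum_Ico_eq_sum_range, Finset.mul_sum]
    refine Finset.sum_congr rfl fun i _ => ?_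
    rw [pow_add]
    ring
  have hlow : (∑ t ∈ Finset.range k, 2^t * g t) < 2^k := by
    have h1 : (∑ t ∈ Finset.range k, 2^t * g t) ≤ ∑ t ∈ Finset.range k, 2^t :=
      Finset.sum_le_sum fun t _ => by
        have := hg t
        calc 2^t * g t ≤ 2^t * 1 := Nat.mul_le_mul_left _ this
        _ = 2^t := by ring
    rw [nat_geo] at h1
    have : 1 ≤ 2^k := Nat.one_le_two_pow
    omega
  rw [hsplit, hhigh]
  set H := ∑ i ∈ Finset.range (n-(k+1)), 2^i * g (k+1+i)
  set L := ∑ t ∈ Finset.range k, 2^t * g t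
  have h2 : L + 2^k * g k + 2^(k+1) * H = L + 2^k * (g k + 2*H) := by ring
  rw [h2, Nat.add_mul_div_left _ _ (Nat.two_pow_pos k),
    Nat.div_eq_of_lt hlow, Nat.zero_add, Nat.add_mul_mod_self_left,
    Nat.mod_eq_of_lt (by have := hg k; omega)]

/-- reading the word `ω` (restricted to positions `< n`) from least significant end -/
def uof (n : ℕ) (ω : ℕ → ℤ) : ℕ → Fin 3 := fun t => enc (ω (n - 1 - t))

section Bridge

variable {n : ℕ} {ω : ℕ → ℤ}

lemma cdgS_eq (hn : 1 ≤ n) (hvals : ∀ i < n, ω i = -1 ∨ ω i = 0 ∨ ω i = 1) :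
    cdgS n ω = ∑ t ∈ Finset.range n, 2^t * val3 (uof n ω t) := by
  unfold cdgS
  have h2 : ∑ t ∈ Finset.range n, 2^t * val3 (uof n ω t)
      = ∑ t ∈ Finset.range n, 2^t * ω (n-1-t) := by
    refine Finset.sum_congr rfl fun t ht => ?_
    show 2^t * val3 (enc (ω (n-1-t))) = 2^t * ω (n-1-t)
    rw [val3_enc (hvals (n-1-t) (by omega))]
  rw [h2, ← Finset.sum_range_reflect (fun t => 2^t * ω (n-1-t)) n]
  refine Finset.sum_congr rfl fun i hi => ?_
  have hi' : i < n := Finset.mem_range.mp hi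
  have : n - 1 - (n - 1 - i) = i := by omega
  rw [this]

lemma one_le_cdgS (hvals : ∀ i < n, ω i = -1 ∨ ω i = 0 ∨ ω i = 1)
    (hF : ω ∈ firstOne n) : 1 ≤ cdgS n ω := by
  obtain ⟨j, hj, h1, h0⟩ := hF
  unfold cdgS
  rw [Finset.range_eq_Ico, ← Finset.sum_Ico_consecutive _ (Nat.zero_le j) hj.le]
  have hz : ∑ i ∈ Finset.Ico 0 j, (2:ℤ)^(n-1-i) * ω i = 0 :=
    Finset.sum_eq_zero fun i hi => by
      rw [h0 i (Finset.mem_Ico.mp hi).2]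
      ring
  rw [hz, zero_add, Finset.sum_eq_sum_Ico_succ_bot hj, h1]
  have hgeo : ∑ i ∈ Finset.Ico (j+1) n, (2:ℤ)^(n-1-i) = 2^(n-1-j) - 1 := by
    rw [Finset.sum_Ico_eq_sum_range]
    have hm : n - (j+1) = n - 1 - j := by omega
    rw [hm]
    calc ∑ k ∈ Finset.range (n-1-j), (2:ℤ)^(n-1-(j+1+k))
        = ∑ k ∈ Finset.range (n-1-j), (2:ℤ)^((n-1-j)-1-k) :=
          Finset.sum_congr rfl fun k hk => by
            congr 1
            have := Finset.mem_range.mp hk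
            omega
      _ = ∑ k ∈ Finset.range (n-1-j), (2:ℤ)^k :=
          Finset.sum_range_reflect (fun k => (2:ℤ)^k) _
      _ = 2^(n-1-j) - 1 := int_geo _
  have hbound : ∑ i ∈ Finset.Ico (j+1) n, -((2:ℤ)^(n-1-i))
      ≤ ∑ i ∈ Finset.Ico (j+1) n, (2:ℤ)^(n-1-i) * ω i := by
    refine Finset.sum_le_sum fun i hi => ?_
    have hin : i < n := (Finset.mem_Ico.mp hi).2
    have hωi : (-1:ℤ) ≤ ω i := by rcases hvals i hin with h | h | h <;> omega
    calc -((2:ℤ)^(n-1-i)) = 2^(n-1-i) * (-1) := by ring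
    _ ≤ 2^(n-1-i) * ω i :=
        mul_le_mul_of_nonneg_left hωi (pow_nonneg (by norm_num) _)
  rw [Finset.sum_neg_distrib, hgeo] at hbound
  linarith

lemma carr_false_and_toNat (hn : 1 ≤ n) (hvals : ∀ i < n, ω i = -1 ∨ ω i = 0 ∨ ω i = 1)
    (hF : ω ∈ firstOne n) :
    (stRun sInit (uof n ω) n).1 = false ∧
      (cdgS n ω).toNat = ∑ t ∈ Finset.range n, 2^t * (dig (uof n ω) t).toNat := by
  set u := uof n ω with hu
  have hinv := invariant u n
  have hcd : cdgS n ω = ∑ t ∈ Finset.range n, 2^t * val3 (u t) := cdgS_eq hn hvals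
  have hpos := one_le_cdgS hvals hF
  set D : ℕ := ∑ t ∈ Finset.range n, 2^t * (dig u t).toNat with hD
  have hDcast : (D:ℤ) = ∑ t ∈ Finset.range n, 2^t * dv (dig u t) := by
    rw [hD]
    push_cast
    exact Finset.sum_congr rfl fun t _ => by rw [dv_toNat]
  have hDlt : D < 2^n := by
    have h1 : D ≤ ∑ t ∈ Finset.range n, 2^t := by
      rw [hD]
      refine Finset.sum_le_sum fun t _ => ?_
      have hb : (dig u t).toNat ≤ 1 := Bool.toNat_le _
      calc 2^t * (dig u t).toNat ≤ 2^t * 1 := Nat.mul_le_mul_left _ hb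
      _ = 2^t := by ring
    rw [nat_geo] at h1
    have : 1 ≤ 2^n := Nat.one_le_two_pow
    omega
  have hDltZ : (D:ℤ) < 2^n := by exact_mod_cast hDlt
  cases hc : (stRun sInit u n).1 with
  | true =>
    exfalso
    rw [hc] at hinv
    norm_num [cv] at hinv
    rw [hcd, hinv, ← hDcast] at hpos
    linarith
  | false =>
    refine ⟨rfl, ?_⟩
    rw [hc] at hinv
    norm_num [cv] at hinv
    rw [hcd, hinv, ← hDcast]
    simp

lemma btilde_eq (hn : 1 ≤ n) (hvals : ∀ i < n, ω i = -1 ∨ ω i = 0 ∨ ω i = 1)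
    (hF : ω ∈ firstOne n) (a : ℕ) :
    btilde n ω a = (dig (uof n ω) (n-1-a)).toNat := by
  obtain ⟨_, hT⟩ := carr_false_and_toNat hn hvals hF
  unfold btilde
  rw [hT]
  exact extract _ (fun t => Bool.toNat_le _) (by omega)

lemma bridge_card (hn : 1 ≤ n) (hvals : ∀ i < n, ω i = -1 ∨ ω i = 0 ∨ ω i = 1)
    (hF : ω ∈ firstOne n) :
    ((Finset.Ico 1 n).filter (fun a => btilde n ω (a-1) = 0 ∧ btilde n ω a = 1)).card
      = cnt sInit (uof n ω) n := by
  set u := uof n ω with hu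
  have hb : ∀ a, btilde n ω a = (dig u (n-1-a)).toNat := btilde_eq hn hvals hF
  rw [cnt_eq_sum]
  have hout : ∀ t, outN (stRun sInit u t) (u t)
      = if ((stRun sInit u t).2 = true ∧ dig u t = false) then 1 else 0 := by
    intro t
    unfold outN dig
    cases h1 : (stRun sInit u t).2 <;> cases h2 : dOut (stRun sInit u t).1 (u t) <;>
      simp [h1, h2]
  rw [Finset.sum_congr rfl (fun t _ => hout t), ← Finset.card_filter]
  have hprv : ∀ t, (stRun sInit u (t+1)).2 = dig u t := fun t => rfl
  refine Finset.card_bij' (fun a _ => n - a) (fun t _ => n - t) ?_ ?_ ?_ ?_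
  · intro a ha
    simp only [Finset.mem_filter, Finset.mem_Ico] at ha
    obtain ⟨⟨ha1, ha2⟩, hA, hB⟩ := ha
    rw [hb] at hA hB
    simp only [Finset.mem_filter, Finset.mem_range]
    have h1 : dig u (n - 1 - (a-1)) = false := by
      cases h : dig u (n - 1 - (a-1)) <;> simp [h] at hA ⊢
    have h2 : dig u (n - 1 - a) = true := by
      cases h : dig u (n - 1 - a) <;> simp [h] at hB ⊢
    refine ⟨by omega, ?_, ?_⟩
    · have hna : n - a = (n - a - 1) + 1 := by omega
      rw [hna, hprv]
      have : n - a - 1 = n - 1 - a := by omega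
      rw [this]
      exact h2
    · have : n - a = n - 1 - (a - 1) := by omega
      rw [this]
      exact h1
  · intro t ht
    simp only [Finset.mem_filter, Finset.mem_range] at ht
    obtain ⟨htn, hP, hQ⟩ := ht
    have ht1 : 1 ≤ t := by
      by_contra h
      have ht0 : t = 0 := by omega
      rw [ht0] at hP
      exact Bool.false_ne_true hP
    simp only [Finset.mem_filter, Finset.mem_Ico]
    refine ⟨⟨by omega, by omega⟩, ?_, ?_⟩
    · rw [hb]
      have : n - 1 - (n - t - 1) = t := by omega
      rw [this, hQ]
      rfl
    · rw [hb]
      have h3 : n - 1 - (n - t) = t - 1 := by omega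
      rw [h3]
      have h4 : t = (t - 1) + 1 := by omega
      rw [h4] at hP
      rw [hprv] at hP
      rw [hP]
      rfl
  · intro a ha
    simp only [Finset.mem_filter, Finset.mem_Ico] at ha
    show n - (n - a) = a
    omega
  · intro t ht
    simp only [Finset.mem_filter, Finset.mem_range] at ht
    have ht1 : 1 ≤ t := by
      by_contra h
      have ht0 : t = 0 := by omega
      rw [ht0] at ht
      exact Bool.false_ne_true ht.2.1
    show n - (n - t) = t
    omega

end Bridge


/-! ### Measure layer -/

section MeasureLayer

open MeasureTheory ProbabilityTheory

variable {μ : Measure (ℕ → ℤ)}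

def cext {n : ℕ} (v : Fin n → Fin 3) : ℕ → ℤ :=
  fun i => if h : i < n then val3 (v ⟨i, h⟩) else 0

def Cyl (n : ℕ) (v : Fin n → Fin 3) : Set (ℕ → ℤ) := {ω | ∀ i < n, ω i = cext v i}

lemma val3_mem : ∀ j : Fin 3, val3 j = -1 ∨ val3 j = 0 ∨ val3 j = 1 := by decide

lemma val3_inj : ∀ j j' : Fin 3, val3 j = val3 j' → j = j' := by decide

lemma val3_eq_one : ∀ j : Fin 3, val3 j = 1 ↔ j = 2 := by decide

lemma val3_eq_zero : ∀ j : Fin 3, val3 j = 0 ↔ j = 1 := by decide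

lemma measurable_cyl {n : ℕ} (v : Fin n → Fin 3) : MeasurableSet (Cyl n v) := by
  have : Cyl n v = ⋂ i ∈ Set.Iio n, (fun ω : ℕ → ℤ => ω i) ⁻¹' {cext v i} := by
    ext ω
    simp [Cyl, Set.mem_iInter]
  rw [this]
  exact MeasurableSet.biInter (Set.to_countable _)
    (fun i _ => (measurable_pi_apply i) (measurableSet_singleton _))

lemma cyl_meas (hμ : IsCDGProductMeasure μ) {n : ℕ} (v : Fin n → Fin 3) :
    μ (Cyl n v) = (1/3 : ENNReal)^n := by
  have h := hμ n (cext v)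
  rw [show Cyl n v = {ω : ℕ → ℤ | ∀ i < n, ω i = cext v i} from rfl, h]
  rw [Finset.prod_congr rfl (fun i hi => if_pos ?_), Finset.prod_const, Finset.card_range]
  have hi' : i < n := Finset.mem_range.mp hi
  show cext v i = -1 ∨ cext v i = 0 ∨ cext v i = 1
  unfold cext
  rw [dif_pos hi']
  exact val3_mem _

lemma cyl_disj {n : ℕ} : (Set.univ : Set (Fin n → Fin 3)).PairwiseDisjoint (Cyl n) := by
  intro v _ v' _ hne
  rw [Function.onFun, Set.disjoint_left]
  intro ω hv hv'
  apply hne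
  funext i
  have h1 := hv i.1 i.isLt
  have h2 := hv' i.1 i.isLt
  unfold cext at h1 h2
  rw [dif_pos i.isLt] at h1 h2
  have := val3_inj _ _ (h1.symm.trans h2)
  simpa using this

lemma union_meas (hμ : IsCDGProductMeasure μ) {n : ℕ} (Vs : Finset (Fin n → Fin 3)) :
    μ (⋃ v ∈ Vs, Cyl n v) = Vs.card * (1/3 : ENNReal)^n := by
  rw [measure_biUnion_finset (cyl_disj.subset (Set.subset_univ _)) (fun v _ => measurable_cyl v)]
  simp [cyl_meas hμ]

lemma mu_univ (hμ : IsCDGProductMeasure μ) : μ Set.univ = 1 := by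
  have h := hμ 0 (fun _ => 0)
  simpa using h

lemma mu_compl_union (hμ : IsCDGProductMeasure μ) (n : ℕ) :
    μ (⋃ v ∈ (Finset.univ : Finset (Fin n → Fin 3)), Cyl n v)ᶜ = 0 := by
  have hU : μ (⋃ v ∈ (Finset.univ : Finset (Fin n → Fin 3)), Cyl n v) = 1 := by
    rw [union_meas hμ, Finset.card_univ, Fintype.card_fun]
    simp only [Fintype.card_fin, one_div]
    rw [← ENNReal.inv_pow, Nat.cast_pow, Nat.cast_ofNat]
    exact ENNReal.mul_inv_cancel (by positivity) (ENNReal.pow_ne_top (by norm_num))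
  have hUm : MeasurableSet (⋃ v ∈ (Finset.univ : Finset (Fin n → Fin 3)), Cyl n v) :=
    MeasurableSet.biUnion (Finset.countable_toSet _) (fun v _ => measurable_cyl v)
  rw [measure_compl hUm (by rw [hU]; exact ENNReal.one_ne_top), mu_univ hμ, hU, tsub_self]

lemma firstOne_measurable (n : ℕ) : MeasurableSet (firstOne n) := by
  have : firstOne n = ⋃ j ∈ Set.Iio n,
      ((fun ω : ℕ → ℤ => ω j) ⁻¹' {1} ∩ ⋂ k ∈ Set.Iio j, (fun ω : ℕ → ℤ => ω k) ⁻¹' {0}) := by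
    ext ω
    simp only [firstOne, Set.mem_setOf_eq, Set.mem_iUnion, Set.mem_inter_iff,
      Set.mem_preimage, Set.mem_singleton_iff, Set.mem_Iio, Set.mem_iInter]
    tauto
  rw [this]
  exact MeasurableSet.biUnion (Set.to_countable _) fun j _ =>
    ((measurable_pi_apply j) (measurableSet_singleton 1)).inter
      (MeasurableSet.biInter (Set.to_countable _) fun k _ =>
        (measurable_pi_apply k) (measurableSet_singleton 0))

def FOneP (n : ℕ) (v : Fin n → Fin 3) : Prop :=
  ∃ j : Fin n, v j = 2 ∧ ∀ k : Fin n, k < j → v k = 1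

instance (n : ℕ) : DecidablePred (FOneP n) := fun _ => by
  unfold FOneP
  infer_instance

lemma mem_firstOne_iff {n : ℕ} {v : Fin n → Fin 3} {ω : ℕ → ℤ} (hω : ω ∈ Cyl n v) :
    ω ∈ firstOne n ↔ FOneP n v := by
  have hv : ∀ i (h : i < n), ω i = val3 (v ⟨i, h⟩) := by
    intro i h
    have := hω i h
    unfold cext at this
    rwa [dif_pos h] at this
  constructor
  · rintro ⟨j, hj, h1, h0⟩
    refine ⟨⟨j, hj⟩, ?_, ?_⟩
    · rw [← val3_eq_one, ← hv j hj]
      exact h1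
    · intro k hk
      rw [← val3_eq_zero, ← hv k.1 k.isLt]
      exact h0 k.1 hk
  · rintro ⟨j, h2, h1⟩
    refine ⟨j.1, j.isLt, ?_, ?_⟩
    · rw [hv j.1 j.isLt]
      simp only [Fin.eta]
      rw [val3_eq_one]
      exact h2
    · intro k hk
      have hkn : k < n := lt_trans hk j.isLt
      rw [hv k hkn, val3_eq_zero]
      exact h1 ⟨k, hkn⟩ hk

def FOneS (n : ℕ) : Finset (Fin n → Fin 3) := Finset.univ.filter (FOneP n)

lemma mu_firstOne (hμ : IsCDGProductMeasure μ) (n : ℕ) :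
    μ (firstOne n) = (FOneS n).card * (1/3 : ENNReal)^n := by
  set U := ⋃ v ∈ (Finset.univ : Finset (Fin n → Fin 3)), Cyl n v with hUdef
  have hUm : MeasurableSet U :=
    MeasurableSet.biUnion (Finset.countable_toSet _) (fun v _ => measurable_cyl v)
  have hsplit := measure_inter_add_diff (μ := μ) (firstOne n) hUm
  have hdiff : μ (firstOne n \ U) = 0 := by
    refine le_antisymm ?_ zero_le
    rw [← mu_compl_union hμ n]
    exact measure_mono fun ω hω => hω.2
  have hinter : firstOne n ∩ U = ⋃ v ∈ FOneS n, Cyl n v := by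
    ext ω
    simp only [Set.mem_inter_iff, Set.mem_iUnion, hUdef, FOneS, Finset.mem_filter,
      Finset.mem_univ, true_and, Finset.mem_coe]
    constructor
    · rintro ⟨hF, v, hv, hc⟩
      exact ⟨v, by rwa [← mem_firstOne_iff hc], hc⟩
    · rintro ⟨v, hP, hc⟩
      exact ⟨(mem_firstOne_iff hc).mpr hP, v, trivial, hc⟩
  rw [← hsplit, hdiff, add_zero, hinter, union_meas hμ]

end MeasureLayer

/-! ### Final assembly -/

section Final

open MeasureTheory ProbabilityTheory Filter

variable {μ : Measure (ℕ → ℤ)}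

def reflT {n : ℕ} (v : Fin n → Fin 3) : Fin n → Fin 3 :=
  fun t => v ⟨n - 1 - t.1, by have := t.isLt; omega⟩

lemma reflT_inj {n : ℕ} : Function.Injective (reflT (n := n)) := by
  intro v v' h
  funext i
  have h2 := congrFun h ⟨n - 1 - i.1, by have := i.isLt; omega⟩
  unfold reflT at h2
  have hidx : (⟨n - 1 - (n - 1 - i.1), by have := i.isLt; omega⟩ : Fin n) = i :=
    Fin.ext (by have := i.isLt; simp; omega)
  rwa [hidx] at h2

lemma cheb_card {n : ℕ} (hn : 2 ≤ n) {ε : ℝ} (hε : 0 < ε) :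
    ((Finset.univ.filter (fun w : Fin n → Fin 3 =>
        ¬ |(cnt sInit (ext w) n : ℝ) - 5/18*n| < ε*n)).card : ℝ)
      ≤ 3^n / (ε^2*n) := by
  set Bad := Finset.univ.filter (fun w : Fin n → Fin 3 =>
        ¬ |(cnt sInit (ext w) n : ℝ) - 5/18*n| < ε*n) with hBad
  have hnR : (0:ℝ) < n := by
    have : (2:ℝ) ≤ n := by exact_mod_cast hn
    linarith
  have h1 : (Bad.card : ℝ) * (ε*n)^2 ≤ ∑ w ∈ Bad, ((cnt sInit (ext w) n : ℝ) - 5/18*n)^2 := by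
    have h1' := Finset.card_nsmul_le_sum Bad (fun w => ((cnt sInit (ext w) n : ℝ) - 5/18*n)^2) ((ε*n)^2) (fun w hw => ?_)
    · rwa [nsmul_eq_mul] at h1'
    rw [hBad, Finset.mem_filter] at hw
    have habs : ε*n ≤ |(cnt sInit (ext w) n : ℝ) - 5/18*n| := not_lt.mp hw.2
    calc (ε*n)^2 ≤ |(cnt sInit (ext w) n : ℝ) - 5/18*n|^2 :=
          pow_le_pow_left₀ (by positivity) habs 2
    _ = ((cnt sInit (ext w) n : ℝ) - 5/18*n)^2 := sq_abs _
  have h2 : ∑ w ∈ Bad, ((cnt sInit (ext w) n : ℝ) - 5/18*n)^2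
      ≤ ∑ w : Fin n → Fin 3, ((cnt sInit (ext w) n : ℝ) - 5/18*n)^2 :=
    Finset.sum_le_sum_of_subset_of_nonneg (Finset.subset_univ _) (fun w _ _ => sq_nonneg _)
  have h3 := var_bound (n := n) hn
  have key : ((Bad.card : ℝ) * (ε^2*n)) * n ≤ (3^n / (ε^2*n)) * (ε^2*n) * n := by
    calc ((Bad.card : ℝ) * (ε^2*n)) * n = (Bad.card : ℝ) * (ε*n)^2 := by ring
    _ ≤ (n:ℝ) * 3^n := le_trans h1 (le_trans h2 h3)
    _ = (3^n / (ε^2*n)) * (ε^2*n) * n := by field_simp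
  have key2 : (Bad.card : ℝ) * (ε^2*n) ≤ (3^n / (ε^2*n)) * (ε^2*n) :=
    le_of_mul_le_mul_right key hnR
  exact le_of_mul_le_mul_right key2 (by positivity)

lemma fcount_lower {n : ℕ} (hn : 1 ≤ n) : 3^(n-1) ≤ (FOneS n).card := by
  obtain ⟨m, rfl⟩ : ∃ m, n = m + 1 := ⟨n - 1, by omega⟩
  have hc : (3:ℕ)^m = (Finset.univ : Finset (Fin m → Fin 3)).card := by
    simp [Fintype.card_fun]
  simp only [Nat.add_sub_cancel]
  rw [hc]
  refine Finset.card_le_card_of_injOn (fun w => Fin.cons 2 w) (fun w _ => ?_) ?_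
  · simp only [Finset.mem_coe, FOneS, Finset.mem_filter, Finset.mem_univ, true_and]
    exact ⟨0, by simp, fun k hk => absurd hk (Fin.not_lt_zero k)⟩
  · intro a _ b _ h
    exact Fin.cons_right_injective (α := fun _ => Fin 3) (2 : Fin 3) h

lemma main_bounds (hμ : IsCDGProductMeasure μ) {ε : ℝ} (hε : 0 < ε) {n : ℕ} (hn : 2 ≤ n) :
    ENNReal.ofReal (1 - (3/ε^2)/n) ≤
      μ[|firstOne n] {ω : ℕ → ℤ |
        (5 / 18 - ε) * n <
          (((Finset.Ico 1 n).filter (fun a =>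
            btilde n ω (a - 1) = 0 ∧ btilde n ω a = 1)).card : ℝ) ∧
        (((Finset.Ico 1 n).filter (fun a =>
            btilde n ω (a - 1) = 0 ∧ btilde n ω a = 1)).card : ℝ) <
          (5 / 18 + ε) * n} ∧
    μ[|firstOne n] {ω : ℕ → ℤ |
        (5 / 18 - ε) * n <
          (((Finset.Ico 1 n).filter (fun a =>
            btilde n ω (a - 1) = 0 ∧ btilde n ω a = 1)).card : ℝ) ∧
        (((Finset.Ico 1 n).filter (fun a =>
            btilde n ω (a - 1) = 0 ∧ btilde n ω a = 1)).card : ℝ) <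
          (5 / 18 + ε) * n} ≤ 1 := by
  have hn1 : 1 ≤ n := by omega
  set A : Set (ℕ → ℤ) := {ω : ℕ → ℤ |
        (5 / 18 - ε) * n <
          (((Finset.Ico 1 n).filter (fun a =>
            btilde n ω (a - 1) = 0 ∧ btilde n ω a = 1)).card : ℝ) ∧
        (((Finset.Ico 1 n).filter (fun a =>
            btilde n ω (a - 1) = 0 ∧ btilde n ω a = 1)).card : ℝ) <
          (5 / 18 + ε) * n} with hA
  set q : ENNReal := (1/3 : ENNReal)^n with hq
  have hq0 : q ≠ 0 := by
    rw [hq]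
    simp
  have hqtop : q ≠ ⊤ := by
    rw [hq]
    exact ENNReal.pow_ne_top (by norm_num)
  have hμF := mu_firstOne hμ n
  have hFcpos : 0 < (FOneS n).card :=
    lt_of_lt_of_le (by positivity) (fcount_lower hn1)
  have hF0 : μ (firstOne n) ≠ 0 := by
    rw [hμF]
    exact mul_ne_zero (Nat.cast_ne_zero.mpr hFcpos.ne') hq0
  have hFtop : μ (firstOne n) ≠ ⊤ := by
    rw [hμF]
    exact ENNReal.mul_ne_top (ENNReal.natCast_ne_top _) hqtop
  have hcond := cond_apply (firstOne_measurable n) μ A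
  constructor
  · -- lower bound
    set Ok : (Fin n → Fin 3) → Prop :=
      fun v => |(cnt sInit (ext (reflT v)) n : ℝ) - 5/18*n| < ε*n with hOk
    classical
    set Gd : Finset (Fin n → Fin 3) := (FOneS n).filter Ok with hGd
    have hsub : (⋃ v ∈ Gd, Cyl n v) ⊆ firstOne n ∩ A := by
      intro ω hω
      simp only [Set.mem_iUnion, Finset.mem_coe] at hω
      obtain ⟨v, hvG, hc⟩ := hω
      rw [hGd, Finset.mem_filter, FOneS, Finset.mem_filter] at hvG
      obtain ⟨⟨_, hP⟩, hOkv⟩ := hvG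
      have hvv : ∀ i (h : i < n), ω i = val3 (v ⟨i, h⟩) := by
        intro i h
        have := hc i h
        unfold cext at this
        rwa [dif_pos h] at this
      have hvals : ∀ i < n, ω i = -1 ∨ ω i = 0 ∨ ω i = 1 := by
        intro i hi
        rw [hvv i hi]
        exact val3_mem _
      have hFω : ω ∈ firstOne n := (mem_firstOne_iff hc).mpr hP
      have hcard := bridge_card hn1 hvals hFω
      have hcnt_eq : cnt sInit (uof n ω) n = cnt sInit (ext (reflT v)) n := by
        refine cnt_congr _ (fun t ht => ?_)
        have hlt : n - 1 - t < n := by omega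
        show enc (ω (n - 1 - t)) = ext (reflT v) t
        rw [hvv (n-1-t) hlt, enc_val3]
        unfold ext reflT
        rw [dif_pos ht]
      rw [hcnt_eq] at hcard
      refine ⟨hFω, ?_⟩
      rw [hA]
      rw [hOk, abs_lt] at hOkv
      constructor
      · rw [hcard]
        push_cast
        nlinarith [hOkv.1]
      · rw [hcard]
        push_cast
        nlinarith [hOkv.2]
    have hlow : (Gd.card : ENNReal) * q ≤ μ (firstOne n ∩ A) := by
      rw [← union_meas hμ Gd]
      exact measure_mono hsub
    have hr : (Gd.card : ENNReal) / ((FOneS n).card : ENNReal)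
        ≤ (μ (firstOne n))⁻¹ * μ (firstOne n ∩ A) := by
      rw [hμF, ENNReal.mul_inv (Or.inl (Nat.cast_ne_zero.mpr hFcpos.ne')) (Or.inr hq0)]
      calc (Gd.card : ENNReal) / ((FOneS n).card : ENNReal)
          = ((FOneS n).card : ENNReal)⁻¹ * ((Gd.card : ENNReal) * (q * q⁻¹)) := by
            rw [ENNReal.mul_inv_cancel hq0 hqtop, mul_one, div_eq_mul_inv, mul_comm]
        _ = ((FOneS n).card : ENNReal)⁻¹ * q⁻¹ * ((Gd.card : ENNReal) * q) := by ring
        _ ≤ _ := mul_le_mul_right hlow _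
    rw [hcond]
    refine le_trans ?_ hr
    -- remains: ofReal (1 - (3/ε²)/n) ≤ Gd.card / Fc
    by_cases hx : (1:ℝ) - (3/ε^2)/n ≤ 0
    · rw [ENNReal.ofReal_eq_zero.mpr hx]
      exact zero_le
    push_neg at hx
    rw [ENNReal.le_div_iff_mul_le (Or.inl (Nat.cast_ne_zero.mpr hFcpos.ne'))
      (Or.inl (ENNReal.natCast_ne_top _))]
    set Bc : Finset (Fin n → Fin 3) := (FOneS n).filter (fun v => ¬ Ok v) with hBcdef
    have hsplitc : Gd.card + Bc.card = (FOneS n).card :=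
      Finset.card_filter_add_card_filter_not (p := Ok)
    have hBcBad : Bc.card ≤ (Finset.univ.filter (fun w : Fin n → Fin 3 =>
        ¬ |(cnt sInit (ext w) n : ℝ) - 5/18*n| < ε*n)).card := by
      refine Finset.card_le_card_of_injOn reflT (fun v hv => ?_) reflT_inj.injOn
      rw [Finset.mem_coe, Finset.mem_filter]
      rw [Finset.mem_coe, hBcdef, Finset.mem_filter] at hv
      exact ⟨Finset.mem_univ _, hv.2⟩
    have hBc : (Bc.card : ℝ) ≤ 3^n/(ε^2*n) := by
      refine le_trans ?_ (cheb_card hn hε)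
      exact_mod_cast hBcBad
    have hnR : (0:ℝ) < n := by
      have : (2:ℝ) ≤ n := by exact_mod_cast hn
      linarith
    have hFc3 : (3:ℝ)^n ≤ 3 * ((FOneS n).card : ℝ) := by
      have h4 : (3:ℝ)^(n-1) ≤ ((FOneS n).card : ℝ) := by exact_mod_cast fcount_lower hn1
      have h5 : (3:ℝ)^n = 3 * 3^(n-1) := by
        rw [← pow_succ']
        congr 1
        omega
      rw [h5]
      linarith
    have hGc : (Gd.card : ℝ) = ((FOneS n).card : ℝ) - (Bc.card : ℝ) := by
      have h6 : ((Gd.card : ℝ) + (Bc.card : ℝ)) = ((FOneS n).card : ℝ) := by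
        exact_mod_cast hsplitc
      linarith
    have hreal : (1 - (3/ε^2)/n) * ((FOneS n).card : ℝ) ≤ (Gd.card : ℝ) := by
      have e0 : (1 - (3/ε^2)/(n:ℝ)) * ((FOneS n).card : ℝ)
          = ((FOneS n).card : ℝ) - (3/ε^2)/(n:ℝ) * ((FOneS n).card : ℝ) := by ring
      have e1 : (3/ε^2)/(n:ℝ) * ((FOneS n).card : ℝ)
          = 3 * ((FOneS n).card : ℝ) / (ε^2*n) := by
        field_simp
      have e2 : (3:ℝ)^n/(ε^2*n) ≤ 3 * ((FOneS n).card : ℝ) / (ε^2*n) :=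
        (div_le_div_iff_of_pos_right (by positivity)).mpr hFc3
      linarith
    calc ENNReal.ofReal (1 - (3/ε^2)/n) * (((FOneS n).card : ℕ) : ENNReal)
        = ENNReal.ofReal (1 - (3/ε^2)/n) * ENNReal.ofReal (((FOneS n).card : ℕ) : ℝ) := by
          rw [ENNReal.ofReal_natCast]
      _ = ENNReal.ofReal ((1 - (3/ε^2)/n) * (((FOneS n).card : ℕ) : ℝ)) :=
          (ENNReal.ofReal_mul hx.le).symm
      _ ≤ ENNReal.ofReal ((Gd.card : ℝ)) := ENNReal.ofReal_le_ofReal hreal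
      _ = ((Gd.card : ℕ) : ENNReal) := ENNReal.ofReal_natCast _
  · -- upper bound
    rw [hcond]
    calc (μ (firstOne n))⁻¹ * μ (firstOne n ∩ A)
        ≤ (μ (firstOne n))⁻¹ * μ (firstOne n) :=
          mul_le_mul_right (measure_mono Set.inter_subset_left) _
      _ = 1 := ENNReal.inv_mul_cancel hF0 hFtop

end Final

end CDG



/-- with `N(ω)` the number of `a ∈ {1,…,n−1}` with `b̃_{a-1} = 0` and `b̃_a = 1`, for every `ε > 0` the conditional probability `μ((5/18 − ε)n < N < (5/18 + ε)n ∣ F_n) → 1` as `n → ∞`. -/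
theorem stmt_11 (μ : Measure (ℕ → ℤ)) (hμ : IsCDGProductMeasure μ) (ε : ℝ) (hε : 0 < ε) :
    Tendsto (fun n : ℕ =>
      μ[|firstOne n] {ω : ℕ → ℤ |
        (5 / 18 - ε) * n <
          (((Finset.Ico 1 n).filter (fun a =>
            btilde n ω (a - 1) = 0 ∧ btilde n ω a = 1)).card : ℝ) ∧
        (((Finset.Ico 1 n).filter (fun a =>
            btilde n ω (a - 1) = 0 ∧ btilde n ω a = 1)).card : ℝ) <
          (5 / 18 + ε) * n})
      atTop (nhds 1) := by
  have hlow : Tendsto (fun n : ℕ => ENNReal.ofReal (1 - (3/ε^2)/n)) atTop (nhds 1) := by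
    have h1 : Tendsto (fun n : ℕ => 1 - (3/ε^2)/(n:ℝ)) atTop (nhds 1) := by
      have h0 := tendsto_const_div_atTop_nhds_zero_nat (3/ε^2)
      have h2 : Tendsto (fun _ : ℕ => (1:ℝ)) atTop (nhds 1) := tendsto_const_nhds
      simpa using h2.sub h0
    have h3 := ENNReal.tendsto_ofReal h1
    rwa [ENNReal.ofReal_one] at h3
  refine tendsto_of_tendsto_of_tendsto_of_le_of_le' hlow tendsto_const_nhds ?_ ?_
  · filter_upwards [eventually_ge_atTop 2] with n hn
    exact (CDG.main_bounds hμ hε hn).1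
  · filter_upwards [eventually_ge_atTop 2] with n hn
    exact (CDG.main_bounds hμ hε hn).2
end

section
/- For ω ∈ F_n let N(ω) be the number of a ∈ {1, …, n−1} such that b̃_{a-1} = 1 and b̃_a = 1. Then for every ε > 0, the conditional probability μ( (4/18 − ε)·n < N < (4/18 + ε)·n ∣ F_n ) tends to 1 as n → ∞. -/
open MeasureTheory ProbabilityTheory Filter

namespace CDG12

/-- transition of the carry machine: `c` is the carry (true = borrow −1),
`t : Fin 3` encodes the signed digit `t − 1 ∈ {-1,0,1}`.  Result: (binary digit, new carry). -/
def nxt (c : Bool) (t : Fin 3) : Bool × Bool :=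
  if c then (if t = 0 then (false, true) else if t = 1 then (true, true) else (false, false))
  else (if t = 0 then (true, true) else if t = 1 then (false, false) else (true, false))

/-- total number of adjacent `11` pairs in the binary digit string produced by the machine,
including the pair involving the leading `1` (bonus term in the base case). -/
def Ntot : Bool → Bool → List (Fin 3) → ℕ
  | dp, c, [] => if dp && !c then 1 else 0
  | dp, c, t :: l => (if dp && (nxt c t).1 then 1 else 0) + Ntot (nxt c t).1 (nxt c t).2 l

/-- first moment sums -/
def bm : ℕ → Bool → Bool → ℤ
  | 0, dp, c => if dp && !c then 1 else 0
  | m + 1, dp, c => ∑ t : Fin 3,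
      ((if dp && (nxt c t).1 then (1:ℤ) else 0) * 3 ^ m + bm m (nxt c t).1 (nxt c t).2)

/-- second moment sums -/
def qm : ℕ → Bool → Bool → ℤ
  | 0, dp, c => if dp && !c then 1 else 0
  | m + 1, dp, c => ∑ t : Fin 3,
      ((if dp && (nxt c t).1 then (1:ℤ) else 0) * 3 ^ m
        + 2 * (if dp && (nxt c t).1 then (1:ℤ) else 0) * bm m (nxt c t).1 (nxt c t).2
        + qm m (nxt c t).1 (nxt c t).2)

lemma sum_pi_fin_succ {M : Type*} [AddCommMonoid M] {m : ℕ} (f : (Fin (m+1) → Fin 3) → M) :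
    ∑ η : Fin (m+1) → Fin 3, f η = ∑ t : Fin 3, ∑ η : Fin m → Fin 3, f (Fin.cons t η) := by
  rw [← Equiv.sum_comp (Fin.consEquiv (fun _ => Fin 3)) f, Fintype.sum_prod_type]
  rfl

lemma ofFn_cons {m : ℕ} (t : Fin 3) (η : Fin m → Fin 3) :
    List.ofFn (Fin.cons t η : Fin (m+1) → Fin 3) = t :: List.ofFn η := by
  rw [List.ofFn_succ]
  simp

lemma bm_eq (m : ℕ) (dp c : Bool) :
    bm m dp c = ∑ η : Fin m → Fin 3, (Ntot dp c (List.ofFn η) : ℤ) := by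
  induction m generalizing dp c with
  | zero => simp [bm, Ntot]
  | succ m ih =>
      rw [sum_pi_fin_succ]
      simp only [ofFn_cons, Ntot]
      simp only [bm, ih]
      refine Finset.sum_congr rfl fun t _ => ?_
      push_cast
      rw [Finset.sum_add_distrib, Finset.sum_const, Finset.card_univ, Fintype.card_fun,
        Fintype.card_fin, Fintype.card_fin, nsmul_eq_mul]
      push_cast
      ring

lemma qm_eq (m : ℕ) (dp c : Bool) :
    qm m dp c = ∑ η : Fin m → Fin 3, ((Ntot dp c (List.ofFn η) : ℤ))^2 := by
  induction m generalizing dp c with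
  | zero => cases dp <;> cases c <;> simp [qm, Ntot]
  | succ m ih =>
      rw [sum_pi_fin_succ]
      simp only [ofFn_cons, Ntot]
      simp only [qm, ih, bm_eq]
      refine Finset.sum_congr rfl fun t _ => ?_
      push_cast
      have expand : ∀ η ∈ (Finset.univ : Finset (Fin m → Fin 3)),
          ((if dp && (nxt c t).1 then (1:ℤ) else 0) + (Ntot (nxt c t).1 (nxt c t).2 (List.ofFn η) : ℤ))^2
          = (if dp && (nxt c t).1 then (1:ℤ) else 0)
            + 2 * (if dp && (nxt c t).1 then (1:ℤ) else 0) * (Ntot (nxt c t).1 (nxt c t).2 (List.ofFn η) : ℤ)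
            + (Ntot (nxt c t).1 (nxt c t).2 (List.ofFn η) : ℤ)^2 := by
        intro η _
        by_cases hP : (dp && (nxt c t).1) = true <;> simp [hP] <;> ring
      rw [Finset.sum_congr rfl expand, Finset.sum_add_distrib, Finset.sum_add_distrib,
        Finset.sum_const, Finset.card_univ, Fintype.card_fun, Fintype.card_fin, Fintype.card_fin,
        nsmul_eq_mul, ← Finset.mul_sum]
      push_cast
      ring

@[simp] lemma nxt_f0 : nxt false 0 = (true, true) := rfl
@[simp] lemma nxt_f1 : nxt false 1 = (false, false) := rfl
@[simp] lemma nxt_f2 : nxt false 2 = (true, false) := rfl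
@[simp] lemma nxt_t0 : nxt true 0 = (false, true) := rfl
@[simp] lemma nxt_t1 : nxt true 1 = (true, true) := rfl
@[simp] lemma nxt_t2 : nxt true 2 = (false, false) := rfl

lemma closed_forms : ∀ m : ℕ, 2 ≤ m →
    (9 * bm m false false = (2*m+1)*3^m ∧ 9 * bm m false true = (2*m-2)*3^m ∧
     9 * bm m true false = (2*m+7)*3^m ∧ 9 * bm m true true = (2*m+1)*3^m) ∧
    (81 * qm m false false = (4*m^2+22*m+3)*3^m ∧ 81 * qm m false true = (4*m^2+10*m-18)*3^m ∧
     81 * qm m true false = (4*m^2+46*m+81)*3^m ∧ 81 * qm m true true = (4*m^2+22*m+3)*3^m) := by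
  intro m hm
  induction m, hm using Nat.le_induction with
  | base =>
      have hb : bm 2 false false = 5 ∧ bm 2 false true = 2 ∧ bm 2 true false = 11 ∧
          bm 2 true true = 5 := by
        norm_num [bm, Fin.sum_univ_three]
      have hq : qm 2 false false = 7 ∧ qm 2 false true = 2 ∧ qm 2 true false = 21 ∧
          qm 2 true true = 7 := by
        norm_num [qm, bm, Fin.sum_univ_three]
      refine ⟨⟨?_, ?_, ?_, ?_⟩, ⟨?_, ?_, ?_, ?_⟩⟩ <;>
        simp [hb.1, hb.2.1, hb.2.2.1, hb.2.2.2, hq.1, hq.2.1, hq.2.2.1, hq.2.2.2] <;> norm_num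
  | succ m hm ih =>
      obtain ⟨⟨b1, b2, b3, b4⟩, ⟨q1, q2, q3, q4⟩⟩ := ih
      have e1 : bm (m+1) false false = bm m true true + bm m false false + bm m true false := by
        simp [bm, Fin.sum_univ_three]
      have e2 : bm (m+1) false true = bm m false true + bm m true true + bm m false false := by
        simp [bm, Fin.sum_univ_three]
      have e3 : bm (m+1) true false = 2 * 3^m + bm m true true + bm m false false + bm m true false := by
        simp [bm, Fin.sum_univ_three]; ring
      have e4 : bm (m+1) true true = 3^m + bm m false true + bm m true true + bm m false false := by
        simp [bm, Fin.sum_univ_three]; ring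
      have f1 : qm (m+1) false false = qm m true true + qm m false false + qm m true false := by
        simp [qm, Fin.sum_univ_three]
      have f2 : qm (m+1) false true = qm m false true + qm m true true + qm m false false := by
        simp [qm, Fin.sum_univ_three]
      have f3 : qm (m+1) true false = 2 * 3^m + 2 * bm m true true + 2 * bm m true false
          + qm m true true + qm m false false + qm m true false := by
        simp [qm, Fin.sum_univ_three]; ring
      have f4 : qm (m+1) true true = 3^m + 2 * bm m true true
          + qm m false true + qm m true true + qm m false false := by
        simp [qm, Fin.sum_univ_three]; ring
      refine ⟨⟨?_, ?_, ?_, ?_⟩, ⟨?_, ?_, ?_, ?_⟩⟩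
      · rw [e1]; push_cast; linear_combination b4 + b1 + b3
      · rw [e2]; push_cast; linear_combination b2 + b4 + b1
      · rw [e3]; push_cast; linear_combination b4 + b1 + b3
      · rw [e4]; push_cast; linear_combination b2 + b4 + b1
      · rw [f1]; push_cast; linear_combination q4 + q1 + q3
      · rw [f2]; push_cast; linear_combination q2 + q4 + q1
      · rw [f3]; push_cast; linear_combination 18*b4 + 18*b3 + q4 + q1 + q3
      · rw [f4]; push_cast; linear_combination 18*b4 + q2 + q4 + q1

/-- the exact Chebyshev sum -/
lemma cheb_sum {m : ℕ} (hm : 2 ≤ m) :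
    ∑ η : Fin m → Fin 3, (9 * (Ntot false false (List.ofFn η) : ℤ) - 2*m)^2
      = (18*(m:ℤ)+3) * 3^m := by
  obtain ⟨⟨b1, -, -, -⟩, ⟨q1, -, -, -⟩⟩ := closed_forms m hm
  have expand : ∀ x : ℤ, (9 * x - 2*(m:ℤ))^2 = 81 * x^2 - 36*(m:ℤ)*x + 4*(m:ℤ)^2 := by
    intro x; ring
  simp only [expand]
  have h1 := bm_eq m false false
  have h2 := qm_eq m false false
  rw [Finset.sum_add_distrib, Finset.sum_sub_distrib, ← Finset.mul_sum, ← Finset.mul_sum,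
    ← h1, ← h2, Finset.sum_const, Finset.card_univ, Fintype.card_fun, Fintype.card_fin,
    Fintype.card_fin, nsmul_eq_mul]
  push_cast
  linear_combination q1 - 4*(m:ℤ)*b1

/-- binary digit `k` of the nonnegative integer `s` -/
def dig (s : ℤ) (k : ℕ) : ℕ := s.toNat / 2^k % 2

/-- value of a signed-digit list, least significant first -/
def val : List (Fin 3) → ℤ
  | [] => 0
  | t :: l => ((t:ℤ) - 1) + 2 * val l

/-- the integer whose binary digits the machine computes -/
def Wnum (c : Bool) (l : List (Fin 3)) : ℤ :=
  2 ^ l.length + val l - (if c then 1 else 0)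

lemma val_bound (l : List (Fin 3)) : |val l| ≤ 2 ^ l.length - 1 := by
  induction l with
  | nil => simp [val]
  | cons t l ih =>
      have ht : |((t:ℤ) - 1)| ≤ 1 := by
        have := t.isLt
        rw [abs_le]; omega
      rw [abs_le] at ht ih ⊢
      have hP : (0:ℤ) < 2 ^ l.length := by positivity
      simp only [val, List.length_cons, pow_succ]
      constructor <;> linarith

lemma Wnum_nonneg (c : Bool) (l : List (Fin 3)) : 0 ≤ Wnum c l := by
  have h := val_bound l
  rw [abs_le] at h
  unfold Wnum
  have hP : (0:ℤ) < 2 ^ l.length := by positivity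
  rcases c with _ | _ <;> simp <;> linarith

lemma Wnum_lt (c : Bool) (l : List (Fin 3)) : Wnum c l < 2 ^ (l.length + 1) := by
  have h := val_bound l
  rw [abs_le] at h
  unfold Wnum
  have hP : (0:ℤ) < 2 ^ l.length := by positivity
  rw [pow_succ]
  rcases c with _ | _ <;> simp <;> linarith

/-- transition identity of the machine -/
lemma nxt_key (c : Bool) (t : Fin 3) :
    ((t:ℤ) - 1) - (if c then 1 else 0)
      = (if (nxt c t).1 then 1 else 0) - 2 * (if (nxt c t).2 then 1 else 0) := by
  fin_cases t <;> cases c <;> simp [nxt]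

lemma Wnum_cons (c : Bool) (t : Fin 3) (l : List (Fin 3)) :
    Wnum c (t :: l) = (if (nxt c t).1 then 1 else 0) + 2 * Wnum (nxt c t).2 l := by
  simp only [Wnum, val, List.length_cons, pow_succ]
  linear_combination nxt_key c t

/-- main correspondence: `Ntot` counts adjacent `11`-pairs in the binary digits of `Wnum`. -/
lemma Ntot_eq_digits : ∀ (l : List (Fin 3)) (dp c : Bool),
    Ntot dp c l
      = (if dp ∧ dig (Wnum c l) 0 = 1 then 1 else 0)
        + ((Finset.range l.length).filter
            (fun k => dig (Wnum c l) k = 1 ∧ dig (Wnum c l) (k+1) = 1)).card := by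
  intro l
  induction l with
  | nil =>
      intro dp c
      cases c <;> cases dp <;> simp [Ntot, Wnum, val, dig]
  | cons t l ih =>
      intro dp c
      have hW := Wnum_cons c t l
      have hW' := Wnum_nonneg (nxt c t).2 l
      have hwt : (Wnum c (t :: l)).toNat
          = 2 * (Wnum (nxt c t).2 l).toNat + (if (nxt c t).1 then 1 else 0) := by
        rcases hn : (nxt c t).1 with _ | _ <;> rw [hn] at hW <;> simp [hn] at hW ⊢ <;> omega
      have digs0 : dig (Wnum c (t :: l)) 0 = (if (nxt c t).1 then 1 else 0) := by
        simp only [dig, pow_zero, Nat.div_one, hwt]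
        rcases hn : (nxt c t).1 with _ | _ <;> simp [hn] <;> omega
      have digsS : ∀ k, dig (Wnum c (t :: l)) (k+1) = dig (Wnum (nxt c t).2 l) k := by
        intro k
        simp only [dig, hwt, pow_succ']
        rw [← Nat.div_div_eq_div_mul]
        congr 2
        rcases hn : (nxt c t).1 with _ | _ <;> simp [hn] <;> omega
      show (if dp && (nxt c t).1 then 1 else 0) + Ntot (nxt c t).1 (nxt c t).2 l = _
      rw [Finset.card_filter, List.length_cons, Finset.sum_range_succ']
      simp only [digsS, digs0]
      rw [ih (nxt c t).1 (nxt c t).2, Finset.card_filter]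
      rcases (nxt c t).1 with _ | _ <;> rcases dp with _ | _ <;> simp <;> ring

/-- embed a `Fin 3`-string as an integer sequence with values in `{-1,0,1}` -/
def extQ (n : ℕ) (c : Fin n → Fin 3) : ℕ → ℤ := fun i => if h : i < n then (c ⟨i, h⟩ : ℤ) - 1 else 0

/-- the string with first `1` at position `j` and free digits `η` (reversed) -/
def Phi (n j : ℕ) (η : Fin (n - 1 - j) → Fin 3) : Fin n → Fin 3 := fun i =>
  if (i : ℕ) < j then 1 else if (i : ℕ) = j then 2
  else if h : n - 1 - (i : ℕ) < n - 1 - j then η ⟨n - 1 - (i : ℕ), h⟩ else 1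

lemma val_eq_sum (l : List (Fin 3)) :
    val l = ∑ i ∈ Finset.range l.length, 2 ^ i * ((l.getD i 0 : ℤ) - 1) := by
  induction l with
  | nil => simp [val]
  | cons t l ih =>
      rw [val, List.length_cons, Finset.sum_range_succ', ih]
      have h1 : ∀ i ∈ Finset.range l.length,
          (2:ℤ) ^ (i+1) * (((t :: l).getD (i+1) 0 : ℤ) - 1) = 2 * (2 ^ i * ((l.getD i 0 : ℤ) - 1)) := by
        intro i _
        show (2:ℤ) ^ (i+1) * ((l.getD i 0 : ℤ) - 1) = _
        rw [pow_succ]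
        ring
      rw [Finset.sum_congr rfl h1, ← Finset.mul_sum]
      show _ = 2 * _ + 2 ^ 0 * (((t : ℤ)) - 1)
      ring

lemma getD_ofFn {m : ℕ} (η : Fin m → Fin 3) {i : ℕ} (h : i < m) :
    (List.ofFn η).getD i 0 = η ⟨i, h⟩ := by
  rw [List.getD_eq_getElem _ _ (by simpa using h)]
  simp

lemma cdgS_Phi {n j : ℕ} (hj : j < n) (η : Fin (n - 1 - j) → Fin 3) :
    cdgS n (extQ n (Phi n j η)) = Wnum false (List.ofFn η) := by
  have key : ∀ i ∈ Finset.range n, 2 ^ (n - 1 - (n - 1 - i)) * extQ n (Phi n j η) (n - 1 - i)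
      = (if i < n - 1 - j then 2 ^ i * (((List.ofFn η).getD i 0 : ℤ) - 1)
         else if i = n - 1 - j then 2 ^ i else 0) := by
    intro i hi
    rw [Finset.mem_range] at hi
    have h1 : n - 1 - (n - 1 - i) = i := by omega
    rw [h1]
    by_cases h2 : i < n - 1 - j
    · have h3 : n - 1 - i < n := by omega
      have h4 : ¬ ((n : ℕ) - 1 - i < j) := by omega
      have h5 : ¬ ((n : ℕ) - 1 - i = j) := by omega
      have h6 : n - 1 - (n - 1 - i) < n - 1 - j := by omega
      rw [if_pos h2, extQ]
      rw [dif_pos h3]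
      show 2 ^ i * ((Phi n j η ⟨n - 1 - i, h3⟩ : ℤ) - 1) = _
      rw [Phi]
      simp only [h4, h5, if_false, h1]
      rw [dif_pos h2, getD_ofFn η h2]
    · by_cases h7 : i = n - 1 - j
      · have h3 : n - 1 - i < n := by omega
        have h8 : n - 1 - i = j := by omega
        rw [if_neg h2, if_pos h7, extQ, dif_pos h3]
        show 2 ^ i * ((Phi n j η ⟨n - 1 - i, h3⟩ : ℤ) - 1) = _
        rw [Phi]
        simp only [h8]
        norm_num
      · have h3 : i ≤ n - 1 := by omega
        have h9 : n - 1 - i < n := by omega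
        have h4 : n - 1 - i < j := by omega
        rw [if_neg h2, if_neg h7, extQ, dif_pos h9]
        show 2 ^ i * ((Phi n j η ⟨n - 1 - i, h9⟩ : ℤ) - 1) = 0
        rw [Phi]
        simp only [h4, if_true]
        norm_num
  rw [cdgS, ← Finset.sum_range_reflect, Finset.sum_congr rfl key]
  rw [Wnum]
  simp only [List.length_ofFn, Bool.false_eq_true, if_false, sub_zero]
  rw [val_eq_sum]
  simp only [List.length_ofFn]
  have hmn : n - 1 - j + 1 ≤ n := by omega
  rw [← Finset.sum_range_add_sum_Ico _ hmn, Finset.sum_range_succ]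
  have hzero : ∀ i ∈ Finset.Ico (n - 1 - j + 1) n,
      (if i < n - 1 - j then 2 ^ i * (((List.ofFn η).getD i 0 : ℤ) - 1)
       else if i = n - 1 - j then 2 ^ i else 0) = 0 := by
    intro i hi
    rw [Finset.mem_Ico] at hi
    rw [if_neg (by omega), if_neg (by omega)]
  rw [Finset.sum_eq_zero hzero, add_zero, if_neg (by omega), if_pos rfl]
  have hh : ∀ i ∈ Finset.range (n - 1 - j),
      (if i < n - 1 - j then 2 ^ i * (((List.ofFn η).getD i 0 : ℤ) - 1)
       else if i = n - 1 - j then 2 ^ i else 0) = 2 ^ i * (((List.ofFn η).getD i 0 : ℤ) - 1) := by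
    intro i hi
    rw [Finset.mem_range] at hi
    rw [if_pos hi]
  rw [Finset.sum_congr rfl hh]
  ring

lemma btilde_dig {n : ℕ} (ω : ℕ → ℤ) (a : ℕ) : btilde n ω a = dig (cdgS n ω) (n - 1 - a) := rfl

lemma Ecount_Phi {n j : ℕ} (hj : j < n) (η : Fin (n - 1 - j) → Fin 3) :
    ((Finset.Ico 1 n).filter (fun a => btilde n (extQ n (Phi n j η)) (a-1) = 1
        ∧ btilde n (extQ n (Phi n j η)) a = 1)).card
      = Ntot false false (List.ofFn η) := by
  set W := Wnum false (List.ofFn η) with hWdef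
  have hS : cdgS n (extQ n (Phi n j η)) = W := cdgS_Phi hj η
  have hb : ∀ a, btilde n (extQ n (Phi n j η)) a = dig W (n - 1 - a) := by
    intro a; rw [btilde_dig, hS]
  have hlt : W < 2 ^ (n - 1 - j + 1) := by
    have := Wnum_lt false (List.ofFn η)
    simpa using this
  have hdig0 : ∀ k, n - 1 - j ≤ k → dig W (k + 1) = 0 := by
    intro k hk
    have h2 : W.toNat < 2 ^ (k + 1) := by
      have h3 : (2:ℤ) ^ (n - 1 - j + 1) ≤ 2 ^ (k+1) := by
        apply pow_le_pow_right₀ (by norm_num) (by omega)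
      have h4 : (W.toNat : ℤ) < 2 ^ (k+1) := by
        rw [Int.toNat_of_nonneg (Wnum_nonneg _ _)]
        exact lt_of_lt_of_le hlt h3
      exact_mod_cast h4
    rw [dig, Nat.div_eq_of_lt h2]
  rw [Ntot_eq_digits]
  simp only [Bool.false_eq_true, false_and, if_false, zero_add, List.length_ofFn]
  have efil : (Finset.range (n - 1)).filter (fun k => dig W k = 1 ∧ dig W (k+1) = 1)
      = (Finset.range (n - 1 - j)).filter (fun k => dig W k = 1 ∧ dig W (k+1) = 1) := by
    apply Finset.ext
    intro k
    simp only [Finset.mem_filter, Finset.mem_range]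
    constructor
    · rintro ⟨hk, p1, p2⟩
      refine ⟨?_, p1, p2⟩
      by_contra hge
      rw [hdig0 k (by omega)] at p2
      omega
    · rintro ⟨hk, p1, p2⟩
      exact ⟨by omega, p1, p2⟩
  rw [← efil]
  apply Finset.card_nbij' (fun a => n - 1 - a) (fun k => n - 1 - k)
  · intro a ha
    simp only [Finset.mem_coe, Finset.mem_filter, Finset.mem_Ico] at ha
    obtain ⟨⟨ha1, ha2⟩, q1, q2⟩ := ha
    simp only [Finset.mem_coe, Finset.mem_filter, Finset.mem_range]
    rw [hb] at q1 q2
    have e1 : n - 1 - (a - 1) = n - 1 - a + 1 := by omega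
    rw [e1] at q1
    exact ⟨by omega, q2, q1⟩
  · intro k hk
    simp only [Finset.mem_coe, Finset.mem_filter, Finset.mem_range] at hk
    obtain ⟨hk1, p1, p2⟩ := hk
    simp only [Finset.mem_coe, Finset.mem_filter, Finset.mem_Ico]
    have e2 : n - 1 - (n - 1 - k) = k := by omega
    have e3 : n - 1 - (n - 1 - k - 1) = k + 1 := by omega
    rw [hb, hb, e2, e3]
    exact ⟨⟨by omega, by omega⟩, p2, p1⟩
  · intro a ha
    simp only [Finset.mem_coe, Finset.mem_filter, Finset.mem_Ico] at ha ⊢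
    omega
  · intro k hk
    simp only [Finset.mem_coe, Finset.mem_filter, Finset.mem_range] at hk ⊢
    omega

lemma cheb_count {m : ℕ} (hm : 2 ≤ m) (r : ℝ) (hr : 0 ≤ r) :
    ((Finset.univ.filter (fun η : Fin m → Fin 3 =>
        r ≤ |9 * (Ntot false false (List.ofFn η) : ℝ) - 2 * m|)).card : ℝ) * r ^ 2
      ≤ (18 * (m:ℝ) + 3) * 3 ^ m := by
  have hsum : ∑ η : Fin m → Fin 3, (9 * (Ntot false false (List.ofFn η) : ℝ) - 2 * m) ^ 2
      = (18 * (m:ℝ) + 3) * 3 ^ m := by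
    have h := cheb_sum hm
    have h2 := congrArg (fun z : ℤ => (z : ℝ)) h
    push_cast at h2
    exact h2
  calc ((Finset.univ.filter (fun η : Fin m → Fin 3 =>
        r ≤ |9 * (Ntot false false (List.ofFn η) : ℝ) - 2 * m|)).card : ℝ) * r ^ 2
      = ∑ _η ∈ Finset.univ.filter (fun η : Fin m → Fin 3 =>
          r ≤ |9 * (Ntot false false (List.ofFn η) : ℝ) - 2 * m|), r ^ 2 := by
        rw [Finset.sum_const, nsmul_eq_mul]
    _ ≤ ∑ η ∈ Finset.univ.filter (fun η : Fin m → Fin 3 =>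
          r ≤ |9 * (Ntot false false (List.ofFn η) : ℝ) - 2 * m|),
          (9 * (Ntot false false (List.ofFn η) : ℝ) - 2 * m) ^ 2 := by
        apply Finset.sum_le_sum
        intro η hη
        rw [Finset.mem_filter] at hη
        calc r ^ 2 ≤ |9 * (Ntot false false (List.ofFn η) : ℝ) - 2 * m| ^ 2 :=
              pow_le_pow_left₀ hr hη.2 2
          _ = (9 * (Ntot false false (List.ofFn η) : ℝ) - 2 * m) ^ 2 := sq_abs _
    _ ≤ ∑ η : Fin m → Fin 3, (9 * (Ntot false false (List.ofFn η) : ℝ) - 2 * m) ^ 2 :=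
        Finset.sum_le_sum_of_subset_of_nonneg (Finset.filter_subset _ _)
          (fun _ _ _ => sq_nonneg _)
    _ = (18 * (m:ℝ) + 3) * 3 ^ m := hsum

lemma badj_bound {n j : ℕ} {ε : ℝ} (hε : 0 < ε) (hε8 : ε ≤ 1/8) (hn2 : 2 ≤ ε * n)
    (hj : j < n) (hjJ : (j : ℝ) ≤ ε * n) :
    ((Finset.univ.filter (fun η : Fin (n-1-j) → Fin 3 =>
        ¬ ((4/18 - ε) * n < (Ntot false false (List.ofFn η) : ℝ)
           ∧ (Ntot false false (List.ofFn η) : ℝ) < (4/18 + ε) * n))).card : ℝ)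
      ≤ 3 ^ (n-1-j) / (ε ^ 2 * n) := by
  have hn0 : 0 < (n:ℝ) := by nlinarith
  have hn1 : (1:ℝ) ≤ n := by
    have : (n:ℝ) ≥ 16 := by nlinarith
    linarith
  have hjn8 : (j:ℝ) ≤ (n:ℝ)/8 := by nlinarith
  have hj8 : 8 * j ≤ n := by
    have : ((8 * j : ℕ) : ℝ) ≤ (n : ℝ) := by push_cast; linarith
    exact_mod_cast this
  have hn16 : 16 ≤ n := by
    have : (16:ℝ) ≤ (n:ℝ) := by nlinarith
    exact_mod_cast this
  have hm2 : 2 ≤ n - 1 - j := by omega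
  set m := n - 1 - j with hm
  have hmcast : (m : ℝ) = (n:ℝ) - 1 - j := by
    rw [hm]
    rw [Nat.cast_sub (by omega : j ≤ n - 1), Nat.cast_sub (by omega : 1 ≤ n)]
    simp
  have hmlen : (m : ℝ) ≤ (n : ℝ) := by rw [hmcast]; linarith
  have hsub : Finset.univ.filter (fun η : Fin m → Fin 3 =>
        ¬ ((4/18 - ε) * n < (Ntot false false (List.ofFn η) : ℝ)
           ∧ (Ntot false false (List.ofFn η) : ℝ) < (4/18 + ε) * n))
      ⊆ Finset.univ.filter (fun η : Fin m → Fin 3 =>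
        6 * ε * n ≤ |9 * (Ntot false false (List.ofFn η) : ℝ) - 2 * m|) := by
    intro η hη
    simp only [Finset.mem_filter, Finset.mem_univ, true_and] at hη ⊢
    revert hη
    intro hbad
    set N := (Ntot false false (List.ofFn η) : ℝ) with hN
    have hN0 : 0 ≤ N := by positivity
    rw [not_and_or] at hbad
    rcases hbad with h | h
    · push_neg at h
      rw [le_abs]
      right
      rw [hmcast]
      nlinarith
    · push_neg at h
      rw [le_abs]
      left
      rw [hmcast]
      nlinarith
  have hc := cheb_count hm2 (6 * ε * n) (by positivity)
  have hBC : ((Finset.univ.filter (fun η : Fin m → Fin 3 =>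
        ¬ ((4/18 - ε) * n < (Ntot false false (List.ofFn η) : ℝ)
           ∧ (Ntot false false (List.ofFn η) : ℝ) < (4/18 + ε) * n))).card : ℝ)
      ≤ ((Finset.univ.filter (fun η : Fin m → Fin 3 =>
        6 * ε * n ≤ |9 * (Ntot false false (List.ofFn η) : ℝ) - 2 * m|)).card : ℝ) := by
    exact_mod_cast Finset.card_le_card hsub
  set B := ((Finset.univ.filter (fun η : Fin m → Fin 3 =>
        ¬ ((4/18 - ε) * n < (Ntot false false (List.ofFn η) : ℝ)
           ∧ (Ntot false false (List.ofFn η) : ℝ) < (4/18 + ε) * n))).card : ℝ)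
  set C := ((Finset.univ.filter (fun η : Fin m → Fin 3 =>
        6 * ε * n ≤ |9 * (Ntot false false (List.ofFn η) : ℝ) - 2 * m|)).card : ℝ)
  have hB0 : 0 ≤ B := by positivity
  have h3m : (0:ℝ) < 3 ^ m := by positivity
  have h18 : 18 * (m:ℝ) + 3 ≤ 36 * n := by linarith
  rw [le_div_iff₀ (by positivity)]
  have key : B * ((6 * ε * n) ^ 2) ≤ (18 * m + 3) * 3 ^ m :=
    le_trans (mul_le_mul_of_nonneg_right hBC (by positivity)) hc
  have key2 : (18 * (m:ℝ) + 3) * 3 ^ m ≤ 36 * n * 3 ^ m :=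
    mul_le_mul_of_nonneg_right h18 (le_of_lt h3m)
  nlinarith [key, key2, mul_pos hn0 hn0]

lemma Phi_apply_high {n j : ℕ} (hj : j < n) (η : Fin (n - 1 - j) → Fin 3) (k : Fin (n - 1 - j)) :
    Phi n j η ⟨n - 1 - (k : ℕ), by omega⟩ = η k := by
  have hk := k.isLt
  have h1 : ¬ ((n - 1 - (k:ℕ)) < j) := by omega
  have h2 : ¬ ((n - 1 - (k:ℕ)) = j) := by omega
  have h3 : n - 1 - (n - 1 - (k:ℕ)) < n - 1 - j := by omega
  show Phi n j η ⟨n - 1 - (k:ℕ), _⟩ = η k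
  rw [Phi]
  simp only [h1, h2, if_false, dif_pos h3]
  congr 1
  apply Fin.ext
  simp only [Fin.val_mk]
  omega

lemma Phi_inj {n j : ℕ} (hj : j < n) : Function.Injective (Phi n j) := by
  intro η η' h
  funext k
  have := congrFun h ⟨n - 1 - (k : ℕ), by have := k.isLt; omega⟩
  rwa [Phi_apply_high hj, Phi_apply_high hj] at this

lemma extQ_Phi_firstOne {n j : ℕ} (hj : j < n) (η : Fin (n - 1 - j) → Fin 3) :
    extQ n (Phi n j η) ∈ firstOne n := by
  refine ⟨j, hj, ?_, ?_⟩
  · rw [extQ, dif_pos hj]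
    show ((Phi n j η ⟨j, hj⟩ : Fin 3) : ℤ) - 1 = 1
    rw [Phi]
    norm_num
  · intro k hk
    have hkn : k < n := by omega
    rw [extQ, dif_pos hkn]
    show ((Phi n j η ⟨k, hkn⟩ : Fin 3) : ℤ) - 1 = 0
    rw [Phi]
    simp only [hk, if_true]
    norm_num

open scoped Classical in
noncomputable def Fbad (n : ℕ) (ε : ℝ) : Finset (Fin n → Fin 3) :=
  Finset.univ.filter (fun c => extQ n c ∈ firstOne n ∧
    ¬ ((4/18 - ε) * n < (((Finset.Ico 1 n).filter (fun a => btilde n (extQ n c) (a-1) = 1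
          ∧ btilde n (extQ n c) a = 1)).card : ℝ)
       ∧ (((Finset.Ico 1 n).filter (fun a => btilde n (extQ n c) (a-1) = 1
          ∧ btilde n (extQ n c) a = 1)).card : ℝ) < (4/18 + ε) * n))

open scoped Classical in
noncomputable def badeta (n j : ℕ) (ε : ℝ) : Finset (Fin (n - 1 - j) → Fin 3) :=
  Finset.univ.filter (fun η : Fin (n-1-j) → Fin 3 =>
        ¬ ((4/18 - ε) * n < (Ntot false false (List.ofFn η) : ℝ)
           ∧ (Ntot false false (List.ofFn η) : ℝ) < (4/18 + ε) * n))

lemma Fbad_cover (n : ℕ) (ε : ℝ) :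
    Fbad n ε ⊆ (Finset.range n).biUnion (fun j => (badeta n j ε).image (Phi n j)) := by
  classical
  intro c hc
  rw [Fbad, Finset.mem_filter] at hc
  obtain ⟨-, ⟨j, hj, hj1, hj0⟩, hbad⟩ := hc
  rw [Finset.mem_biUnion]
  refine ⟨j, Finset.mem_range.mpr hj, ?_⟩
  rw [Finset.mem_image]
  have hPhi : Phi n j (fun k : Fin (n-1-j) => c ⟨n - 1 - (k:ℕ), by have := k.isLt; omega⟩) = c := by
    funext i
    rw [Phi]
    by_cases h1 : (i : ℕ) < j
    · rw [if_pos h1]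
      have := hj0 (i : ℕ) h1
      rw [extQ, dif_pos i.isLt] at this
      have h2 : ((c ⟨(i:ℕ), i.isLt⟩ : Fin 3) : ℤ) = 1 := by linarith
      have h3 : (c ⟨(i:ℕ), i.isLt⟩ : Fin 3) = 1 := by
        have hv : ((c ⟨(i:ℕ), i.isLt⟩ : Fin 3) : ℕ) = 1 := by exact_mod_cast h2
        exact Fin.ext hv
      rw [show (⟨(i:ℕ), i.isLt⟩ : Fin n) = i from Fin.ext rfl] at h3
      exact h3.symm
    · rw [if_neg h1]
      by_cases h2 : (i : ℕ) = j
      · rw [if_pos h2]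
        rw [extQ, dif_pos hj] at hj1
        have h3 : ((c ⟨j, hj⟩ : Fin 3) : ℤ) = 2 := by linarith
        have hv : ((c ⟨j, hj⟩ : Fin 3) : ℕ) = 2 := by exact_mod_cast h3
        have h4 : (c ⟨j, hj⟩ : Fin 3) = 2 := Fin.ext hv
        have h5 : (⟨j, hj⟩ : Fin n) = i := by
          apply Fin.ext
          simp only [Fin.val_mk]
          omega
        rw [h5] at h4
        exact h4.symm
      · have h3 : n - 1 - (i:ℕ) < n - 1 - j := by have := i.isLt; omega
        rw [if_neg h2, dif_pos h3]
        congr 1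
        apply Fin.ext
        simp only [Fin.val_mk]
        have := i.isLt
        omega
  refine ⟨fun k : Fin (n-1-j) => c ⟨n - 1 - (k:ℕ), by have := k.isLt; omega⟩, ?_, hPhi⟩
  rw [badeta, Finset.mem_filter]
  refine ⟨Finset.mem_univ _, ?_⟩
  rw [← Ecount_Phi hj (fun k : Fin (n-1-j) => c ⟨n - 1 - (k:ℕ), by have := k.isLt; omega⟩), hPhi]
  exact hbad

lemma Fbad_le {n : ℕ} {ε : ℝ} (hε : 0 < ε) (hε8 : ε ≤ 1/8) (hn2 : 2 ≤ ε * n) :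
    ((Fbad n ε).card : ℝ)
      ≤ (3:ℝ)^(n-1) * ((3/2)/(ε^2*n) + (1/2) * (1/3)^(Nat.floor (ε*n))) := by
  classical
  have hn0 : 0 < (n:ℝ) := by nlinarith
  set J := Nat.floor (ε * n) with hJ
  have hJle : (J : ℝ) ≤ ε * n := Nat.floor_le (by positivity)
  have step1 : ((Fbad n ε).card : ℝ) ≤ ∑ j ∈ Finset.range n, ((badeta n j ε).card : ℝ) := by
    have h1 : (Fbad n ε).card ≤ ∑ j ∈ Finset.range n, ((badeta n j ε).image (Phi n j)).card :=
      le_trans (Finset.card_le_card (Fbad_cover n ε)) (Finset.card_biUnion_le)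
    have h2 : ∑ j ∈ Finset.range n, ((badeta n j ε).image (Phi n j)).card
        ≤ ∑ j ∈ Finset.range n, (badeta n j ε).card :=
      Finset.sum_le_sum (fun j _ => Finset.card_image_le)
    exact_mod_cast le_trans h1 h2
  have step2 : ∀ j ∈ Finset.range n, ((badeta n j ε).card : ℝ)
      ≤ (3:ℝ)^(n-1-j) / (ε^2 * n) + (if ε * n < (j:ℝ) then (3:ℝ)^(n-1-j) else 0) := by
    intro j hj
    rw [Finset.mem_range] at hj
    by_cases hcase : (j : ℝ) ≤ ε * n
    · have hb := badj_bound hε hε8 hn2 hj hcase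
      rw [badeta]
      refine le_trans hb ?_
      have : (0:ℝ) ≤ (if ε * n < (j:ℝ) then (3:ℝ)^(n-1-j) else 0) := by
        split <;> positivity
      linarith
    · push_neg at hcase
      rw [if_pos hcase]
      have hcard : ((badeta n j ε).card : ℝ) ≤ (3:ℝ)^(n-1-j) := by
        have h3 : (badeta n j ε).card ≤ (Finset.univ : Finset (Fin (n-1-j) → Fin 3)).card :=
          Finset.card_le_card (Finset.filter_subset _ _)
        have h4 : (Finset.univ : Finset (Fin (n-1-j) → Fin 3)).card = 3^(n-1-j) := by
          rw [Finset.card_univ, Fintype.card_fun, Fintype.card_fin, Fintype.card_fin]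
        rw [h4] at h3
        exact_mod_cast h3
      have : (0:ℝ) ≤ (3:ℝ)^(n-1-j) / (ε^2 * n) := by positivity
      linarith
  have geom : ∑ j ∈ Finset.range n, (3:ℝ)^(n-1-j) ≤ (3/2) * 3^(n-1) := by
    rw [Finset.sum_range_reflect (fun i => (3:ℝ)^i) n]
    have := geom_sum_eq (by norm_num : (3:ℝ) ≠ 1) n
    rw [this]
    rcases Nat.eq_zero_or_pos n with h | h
    · subst h; norm_num
    · have h3 : (3:ℝ)^n = 3 * 3^(n-1) := by
        rw [← pow_succ']
        congr 1
        omega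
      rw [h3]
      have : (0:ℝ) < 3^(n-1) := by positivity
      norm_num
      linarith
  have tail : ∑ j ∈ Finset.range n, (if ε * n < (j:ℝ) then (3:ℝ)^(n-1-j) else 0)
      ≤ (1/2) * 3^(n-1) * (1/3)^J := by
    have t1 : ∀ j ∈ Finset.range n, (if ε * n < (j:ℝ) then (3:ℝ)^(n-1-j) else 0)
        ≤ (if J < j then (3:ℝ)^(n-1-j) else 0) := by
      intro j _
      by_cases h : ε * n < (j:ℝ)
      · rw [if_pos h, if_pos (by exact_mod_cast lt_of_le_of_lt hJle h)]
      · rw [if_neg h]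
        split <;> positivity
    refine le_trans (Finset.sum_le_sum t1) ?_
    have t2 : ∑ j ∈ Finset.range n, (if J < j then (3:ℝ)^(n-1-j) else 0)
        = ∑ j ∈ Finset.range n, (if J < n-1-j then (3:ℝ)^(n-1-(n-1-j)) else 0) := by
      exact (Finset.sum_range_reflect (fun j => if J < j then (3:ℝ)^(n-1-j) else 0) n).symm
    rw [t2]
    have t3 : ∀ j ∈ Finset.range n, (if J < n-1-j then (3:ℝ)^(n-1-(n-1-j)) else 0)
        ≤ (if j < n-1-J then (3:ℝ)^j else 0) := by
      intro j hj
      rw [Finset.mem_range] at hj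
      by_cases h : J < n-1-j
      · rw [if_pos h, if_pos (by omega)]
        have : n-1-(n-1-j) = j := by omega
        rw [this]
      · rw [if_neg h]
        split <;> positivity
    refine le_trans (Finset.sum_le_sum t3) ?_
    rcases le_or_gt (n-1) J with hc | hc
    · have : ∀ j ∈ Finset.range n, (if j < n-1-J then (3:ℝ)^j else 0) = 0 := by
        intro j _
        rw [if_neg (by omega)]
      rw [Finset.sum_congr rfl this]
      simp only [Finset.sum_const_zero]
      positivity
    · rw [← Finset.sum_filter]
      have hsub : (Finset.range n).filter (fun j => j < n-1-J) ⊆ Finset.range (n-1-J) := by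
        intro j hj
        simp only [Finset.mem_filter, Finset.mem_range] at hj ⊢
        exact hj.2
      refine le_trans (Finset.sum_le_sum_of_subset_of_nonneg hsub (fun _ _ _ => by positivity)) ?_
      rw [geom_sum_eq (by norm_num : (3:ℝ) ≠ 1)]
      have hKJ : (3:ℝ)^(n-1-J) * 3^J = 3^(n-1) := by
        rw [← pow_add]
        congr 1
        omega
      have h3J : (0:ℝ) < 3^J := by positivity
      have hKval : (3:ℝ)^(n-1-J) = 3^(n-1) * (1/3)^J := by
        rw [one_div, inv_pow]
        field_simp
        linarith [hKJ]
      rw [hKval]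
      have : (0:ℝ) < (3:ℝ)^(n-1) * (1/3)^J := by positivity
      norm_num
      linarith
  calc ((Fbad n ε).card : ℝ) ≤ ∑ j ∈ Finset.range n, ((badeta n j ε).card : ℝ) := step1
    _ ≤ ∑ j ∈ Finset.range n, ((3:ℝ)^(n-1-j) / (ε^2 * n)
          + (if ε * n < (j:ℝ) then (3:ℝ)^(n-1-j) else 0)) := Finset.sum_le_sum step2
    _ = (∑ j ∈ Finset.range n, (3:ℝ)^(n-1-j)) / (ε^2 * n)
          + ∑ j ∈ Finset.range n, (if ε * n < (j:ℝ) then (3:ℝ)^(n-1-j) else 0) := by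
        rw [Finset.sum_add_distrib, Finset.sum_div]
    _ ≤ ((3/2) * 3^(n-1)) / (ε^2 * n) + (1/2) * 3^(n-1) * (1/3)^J := by
        have h1 : (∑ j ∈ Finset.range n, (3:ℝ)^(n-1-j)) / (ε^2 * n)
            ≤ ((3/2) * 3^(n-1)) / (ε^2 * n) :=
          (div_le_div_iff_of_pos_right (by positivity)).mpr geom
        linarith [tail]
    _ = (3:ℝ)^(n-1) * ((3/2)/(ε^2*n) + (1/2) * (1/3)^J) := by ring

end CDG12

namespace CDG12

def Cyl (n : ℕ) (c : Fin n → Fin 3) : Set (ℕ → ℤ) := {ω | ∀ i < n, ω i = extQ n c i}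

lemma Cyl_measurable (n : ℕ) (c : Fin n → Fin 3) : MeasurableSet (Cyl n c) := by
  have : Cyl n c = ⋂ i ∈ Set.Iio n, (fun ω : ℕ → ℤ => ω i) ⁻¹' {extQ n c i} := by
    ext ω
    simp [Cyl, Set.mem_iInter]
  rw [this]
  exact MeasurableSet.biInter (Set.to_countable _)
    (fun i _ => measurable_pi_apply i (measurableSet_singleton _))

lemma meas_Cyl {μ : Measure (ℕ → ℤ)} (hμ : IsCDGProductMeasure μ) (n : ℕ) (c : Fin n → Fin 3) :
    μ (Cyl n c) = (1/3 : ENNReal)^n := by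
  rw [show Cyl n c = {ω : ℕ → ℤ | ∀ i < n, ω i = extQ n c i} from rfl, hμ n (extQ n c)]
  have h1 : ∀ i ∈ Finset.range n,
      (if extQ n c i = -1 ∨ extQ n c i = 0 ∨ extQ n c i = 1 then (1/3 : ENNReal) else 0)
        = (1/3 : ENNReal) := by
    intro i hi
    rw [Finset.mem_range] at hi
    rw [if_pos]
    rw [extQ, dif_pos hi]
    have : ((c ⟨i, hi⟩ : Fin 3) : ℕ) < 3 := (c ⟨i, hi⟩).isLt
    omega
  rw [Finset.prod_congr rfl h1, Finset.prod_const, Finset.card_range]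

lemma Cyl_disjoint {n : ℕ} {c c' : Fin n → Fin 3} (h : c ≠ c') :
    Disjoint (Cyl n c) (Cyl n c') := by
  rw [Set.disjoint_left]
  intro ω h1 h2
  apply h
  funext i
  have e1 := h1 (i : ℕ) i.isLt
  have e2 := h2 (i : ℕ) i.isLt
  rw [e2] at e1
  rw [extQ, dif_pos i.isLt, extQ, dif_pos i.isLt] at e1
  have : ((c ⟨(i:ℕ), i.isLt⟩ : Fin 3) : ℕ) = ((c' ⟨(i:ℕ), i.isLt⟩ : Fin 3) : ℕ) := by
    omega
  have h3 : c ⟨(i:ℕ), i.isLt⟩ = c' ⟨(i:ℕ), i.isLt⟩ := Fin.ext this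
  simpa using h3

lemma measure_count {μ : Measure (ℕ → ℤ)} (hμ : IsCDGProductMeasure μ) (n : ℕ)
    (A : Set (ℕ → ℤ)) [DecidablePred (fun c : Fin n → Fin 3 => extQ n c ∈ A)]
    (hA : ∀ ω ω', (∀ i < n, ω i = ω' i) → (ω ∈ A ↔ ω' ∈ A)) :
    μ A = ((Finset.univ.filter (fun c : Fin n → Fin 3 => extQ n c ∈ A)).card : ENNReal)
      * (1/3 : ENNReal)^n := by
  classical
  set G := ⋃ c : Fin n → Fin 3, Cyl n c with hG
  have hGmeas : MeasurableSet G := MeasurableSet.iUnion (fun c => Cyl_measurable n c)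
  have hμuniv : μ Set.univ = 1 := by
    have := hμ 0 (fun _ => 0)
    simpa using this
  have hμG : μ G = 1 := by
    rw [hG, measure_iUnion (fun c c' h => Cyl_disjoint h) (fun c => Cyl_measurable n c)]
    rw [tsum_fintype]
    have : ∀ c : Fin n → Fin 3, μ (Cyl n c) = (1/3 : ENNReal)^n := meas_Cyl hμ n
    rw [Finset.sum_congr rfl (fun c _ => this c), Finset.sum_const, Finset.card_univ,
      Fintype.card_fun, Fintype.card_fin, Fintype.card_fin]
    rw [nsmul_eq_mul]
    rw [one_div, ← ENNReal.inv_pow, Nat.cast_pow]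
    have h3 : ((3:ℕ):ENNReal) = 3 := by norm_num
    rw [h3, ENNReal.mul_inv_cancel (pow_ne_zero n (by norm_num)) (ENNReal.pow_ne_top (by norm_num))]
  have hGc : μ Gᶜ = 0 := by
    rw [measure_compl hGmeas (by rw [hμG]; exact ENNReal.one_ne_top), hμuniv, hμG, tsub_self]
  have hdecomp : A ∩ G = ⋃ c ∈ Finset.univ.filter (fun c : Fin n → Fin 3 => extQ n c ∈ A),
      Cyl n c := by
    ext ω
    constructor
    · rintro ⟨hωA, hωG⟩
      rw [hG, Set.mem_iUnion] at hωG
      obtain ⟨c, hc⟩ := hωG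
      rw [Set.mem_iUnion]
      refine ⟨c, ?_⟩
      rw [Set.mem_iUnion]
      refine ⟨?_, hc⟩
      rw [Finset.mem_filter]
      exact ⟨Finset.mem_univ _, (hA ω (extQ n c) hc).mp hωA⟩
    · intro hω
      rw [Set.mem_iUnion] at hω
      obtain ⟨c, hc⟩ := hω
      rw [Set.mem_iUnion] at hc
      obtain ⟨hcf, hωc⟩ := hc
      rw [Finset.mem_filter] at hcf
      constructor
      · exact (hA ω (extQ n c) hωc).mpr hcf.2
      · rw [hG, Set.mem_iUnion]; exact ⟨c, hωc⟩
  have hAG : μ A = μ (A ∩ G) := by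
    apply le_antisymm
    · calc μ A = μ ((A ∩ G) ∪ (A ∩ Gᶜ)) := by rw [Set.inter_union_compl]
        _ ≤ μ (A ∩ G) + μ (A ∩ Gᶜ) := measure_union_le _ _
        _ ≤ μ (A ∩ G) + μ Gᶜ := by
            gcongr
            exact Set.inter_subset_right
        _ = μ (A ∩ G) := by rw [hGc, add_zero]
    · exact measure_mono Set.inter_subset_left
  rw [hAG, hdecomp, measure_biUnion_finset ?hd (fun c _ => Cyl_measurable n c)]
  · rw [Finset.sum_congr rfl (fun c _ => meas_Cyl hμ n c), Finset.sum_const, nsmul_eq_mul]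
  case hd =>
    intro c _ c' _ hcc
    exact Cyl_disjoint hcc

end CDG12

namespace CDG12

lemma dep_cdgS {n : ℕ} {ω ω' : ℕ → ℤ} (h : ∀ i < n, ω i = ω' i) : cdgS n ω = cdgS n ω' := by
  apply Finset.sum_congr rfl
  intro i hi
  rw [Finset.mem_range] at hi
  rw [h i hi]

lemma dep_btilde {n : ℕ} {ω ω' : ℕ → ℤ} (h : ∀ i < n, ω i = ω' i) (a : ℕ) :
    btilde n ω a = btilde n ω' a := by
  rw [btilde, btilde, dep_cdgS h]

lemma dep_firstOne {n : ℕ} {ω ω' : ℕ → ℤ} (h : ∀ i < n, ω i = ω' i) :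
    ω ∈ firstOne n ↔ ω' ∈ firstOne n := by
  constructor <;> rintro ⟨j, hj, h1, h0⟩ <;> refine ⟨j, hj, ?_, ?_⟩
  · rw [← h j hj]; exact h1
  · intro k hk; rw [← h k (by omega)]; exact h0 k hk
  · rw [h j hj]; exact h1
  · intro k hk; rw [h k (by omega)]; exact h0 k hk

lemma dep_count {n : ℕ} {ω ω' : ℕ → ℤ} (h : ∀ i < n, ω i = ω' i) :
    ((Finset.Ico 1 n).filter (fun a => btilde n ω (a-1) = 1 ∧ btilde n ω a = 1)).card
      = ((Finset.Ico 1 n).filter (fun a => btilde n ω' (a-1) = 1 ∧ btilde n ω' a = 1)).card := by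
  congr 1
  apply Finset.filter_congr
  intro a _
  rw [dep_btilde h, dep_btilde h]

lemma firstOne_measurable (n : ℕ) : MeasurableSet (firstOne n) := by
  have : firstOne n = ⋃ j ∈ Set.Iio n,
      ((fun ω : ℕ → ℤ => ω j) ⁻¹' {1} ∩ ⋂ k ∈ Set.Iio j, (fun ω : ℕ → ℤ => ω k) ⁻¹' {0}) := by
    ext ω
    simp only [firstOne, Set.mem_setOf_eq, Set.mem_iUnion, Set.mem_inter_iff, Set.mem_preimage,
      Set.mem_singleton_iff, Set.mem_iInter, Set.mem_Iio]
    constructor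
    · rintro ⟨j, hj, h1, h0⟩; exact ⟨j, hj, h1, h0⟩
    · rintro ⟨j, hj, h1, h0⟩; exact ⟨j, hj, h1, h0⟩
  rw [this]
  apply MeasurableSet.biUnion (Set.to_countable _)
  intro j _
  exact ((measurable_pi_apply j) (measurableSet_singleton 1)).inter
    (MeasurableSet.biInter (Set.to_countable _)
      (fun k _ => (measurable_pi_apply k) (measurableSet_singleton 0)))

lemma cond_le_one {μ : Measure (ℕ → ℤ)} {s t : Set (ℕ → ℤ)} (hs : MeasurableSet s) :
    μ[|s] t ≤ 1 := by
  rw [ProbabilityTheory.cond_apply hs]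
  rcases eq_or_ne (μ s) 0 with h0 | h0
  · have : μ (s ∩ t) = 0 := le_antisymm (le_trans (measure_mono Set.inter_subset_left) h0.le)
      zero_le
    rw [this, mul_zero]
    exact zero_le_one
  rcases eq_or_ne (μ s) ⊤ with ht | ht
  · rw [ht, ENNReal.inv_top, zero_mul]
    exact zero_le_one
  calc (μ s)⁻¹ * μ (s ∩ t) ≤ (μ s)⁻¹ * μ s := by
        gcongr
        exact Set.inter_subset_left
    _ = 1 := ENNReal.inv_mul_cancel h0 ht

lemma ennreal_ratio {a b : ℕ} (x : ENNReal) (hx0 : x ≠ 0) (hxt : x ≠ ⊤) (ha : a ≠ 0) :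
    ((a:ENNReal)*x)⁻¹ * ((b:ENNReal)*x) = ENNReal.ofReal ((b:ℝ)/(a:ℝ)) := by
  have ha' : (a:ENNReal) ≠ 0 := by exact_mod_cast ha
  rw [ENNReal.mul_inv (Or.inl ha') (Or.inr hx0)]
  have h1 : (a:ENNReal)⁻¹ * x⁻¹ * ((b:ENNReal) * x) = ((b:ENNReal) * (a:ENNReal)⁻¹) * (x⁻¹ * x) := by
    ring
  rw [h1, ENNReal.inv_mul_cancel hx0 hxt, mul_one]
  rw [ENNReal.ofReal_div_of_pos (by exact_mod_cast Nat.pos_of_ne_zero ha),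
    ENNReal.ofReal_natCast, ENNReal.ofReal_natCast, div_eq_mul_inv]

end CDG12

namespace CDG12

def Eev (n : ℕ) (ε : ℝ) : Set (ℕ → ℤ) := {ω : ℕ → ℤ |
  (4 / 18 - ε) * n <
    (((Finset.Ico 1 n).filter (fun a =>
      btilde n ω (a - 1) = 1 ∧ btilde n ω a = 1)).card : ℝ) ∧
  (((Finset.Ico 1 n).filter (fun a =>
      btilde n ω (a - 1) = 1 ∧ btilde n ω a = 1)).card : ℝ) <
    (4 / 18 + ε) * n}

lemma dep_Eev {n : ℕ} {ε : ℝ} {ω ω' : ℕ → ℤ} (h : ∀ i < n, ω i = ω' i) :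
    ω ∈ Eev n ε ↔ ω' ∈ Eev n ε := by
  have hc := dep_count (n := n) h
  simp only [Eev, Set.mem_setOf_eq, hc]

open scoped Classical in
lemma aN_ge {n : ℕ} (hn : 1 ≤ n) :
    3^(n-1) ≤ (Finset.univ.filter (fun c : Fin n → Fin 3 => extQ n c ∈ firstOne n)).card := by
  classical
  have hj : (0:ℕ) < n := hn
  have hsub : (Finset.univ : Finset (Fin (n-1-0) → Fin 3)).image (Phi n 0)
      ⊆ Finset.univ.filter (fun c : Fin n → Fin 3 => extQ n c ∈ firstOne n) := by
    intro c hc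
    rw [Finset.mem_image] at hc
    obtain ⟨η, -, rfl⟩ := hc
    rw [Finset.mem_filter]
    exact ⟨Finset.mem_univ _, extQ_Phi_firstOne hj η⟩
  have hcard : ((Finset.univ : Finset (Fin (n-1-0) → Fin 3)).image (Phi n 0)).card = 3^(n-1) := by
    rw [Finset.card_image_of_injective _ (Phi_inj hj), Finset.card_univ, Fintype.card_fun,
      Fintype.card_fin, Fintype.card_fin]
    simp
  calc 3^(n-1) = ((Finset.univ : Finset (Fin (n-1-0) → Fin 3)).image (Phi n 0)).card := hcard.symm
    _ ≤ _ := Finset.card_le_card hsub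

open scoped Classical in
lemma aN_ne {n : ℕ} (hn : 1 ≤ n) :
    ((Finset.univ.filter (fun c : Fin n → Fin 3 => extQ n c ∈ firstOne n)).card : ℕ) ≠ 0 := by
  have h1 := aN_ge hn
  have h3 : 0 < 3^(n-1) := by positivity
  omega

open scoped Classical in
lemma main_small {μ : Measure (ℕ → ℤ)} (hμ : IsCDGProductMeasure μ) {ε : ℝ}
    (hε : 0 < ε) (hε8 : ε ≤ 1/8) :
    Tendsto (fun n : ℕ => μ[|firstOne n] (Eev n ε)) atTop (nhds 1) := by
  set J : ℕ → ℕ := fun n => ⌊ε * n⌋₊ with hJdef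
  set gb : ℕ → ℝ := fun n => (3/2)/(ε^2*n) + (1/2)*(1/3)^(J n) with hgbdef
  have hεn : Tendsto (fun n : ℕ => ε * n) atTop atTop :=
    Tendsto.const_mul_atTop hε tendsto_natCast_atTop_atTop
  have key : ∀ n : ℕ, 1 ≤ n → 2 ≤ ε * n →
      μ[|firstOne n] (Eev n ε) = ENNReal.ofReal (((Finset.univ.filter (fun c : Fin n → Fin 3 => extQ n c ∈ firstOne n ∩ Eev n ε)).card : ℝ)/((Finset.univ.filter (fun c : Fin n → Fin 3 => extQ n c ∈ firstOne n)).card : ℝ))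
      ∧ 1 - gb n ≤ ((Finset.univ.filter (fun c : Fin n → Fin 3 => extQ n c ∈ firstOne n ∩ Eev n ε)).card : ℝ)/((Finset.univ.filter (fun c : Fin n → Fin 3 => extQ n c ∈ firstOne n)).card : ℝ) ∧ ((Finset.univ.filter (fun c : Fin n → Fin 3 => extQ n c ∈ firstOne n ∩ Eev n ε)).card : ℝ)/((Finset.univ.filter (fun c : Fin n → Fin 3 => extQ n c ∈ firstOne n)).card : ℝ) ≤ 1 := by
    intro n hn1 hn2
    have hμF : μ (firstOne n) = ((Finset.univ.filter (fun c : Fin n → Fin 3 => extQ n c ∈ firstOne n)).card : ENNReal) * (1/3 : ENNReal)^n :=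
      measure_count hμ n _ (fun ω ω' h => dep_firstOne h)
    have hμFE : μ (firstOne n ∩ Eev n ε) = ((Finset.univ.filter (fun c : Fin n → Fin 3 => extQ n c ∈ firstOne n ∩ Eev n ε)).card : ENNReal) * (1/3 : ENNReal)^n :=
      measure_count hμ n _ (fun ω ω' h => by
        simp only [Set.mem_inter_iff]
        exact and_congr (dep_firstOne h) (dep_Eev h))
    have haN : 3^(n-1) ≤ (Finset.univ.filter (fun c : Fin n → Fin 3 => extQ n c ∈ firstOne n)).card := aN_ge hn1
    have haN0 : ((Finset.univ.filter (fun c : Fin n → Fin 3 => extQ n c ∈ firstOne n)).card : ℕ) ≠ 0 := aN_ne hn1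
    have hx0 : ((1/3 : ENNReal))^n ≠ 0 := by
      apply pow_ne_zero
      simp
    have hxt : ((1/3 : ENNReal))^n ≠ ⊤ := by
      apply ENNReal.pow_ne_top
      simp
    have hcond : μ[|firstOne n] (Eev n ε) = ENNReal.ofReal (((Finset.univ.filter (fun c : Fin n → Fin 3 => extQ n c ∈ firstOne n ∩ Eev n ε)).card : ℝ)/((Finset.univ.filter (fun c : Fin n → Fin 3 => extQ n c ∈ firstOne n)).card : ℝ)) := by
      rw [ProbabilityTheory.cond_apply (firstOne_measurable n), hμF, hμFE]
      exact ennreal_ratio _ hx0 hxt haN0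
    have hpart : ((Finset.univ.filter (fun c : Fin n → Fin 3 => extQ n c ∈ firstOne n ∩ Eev n ε)).card : ℕ) + (Fbad n ε).card = (Finset.univ.filter (fun c : Fin n → Fin 3 => extQ n c ∈ firstOne n)).card := by
      have hsplit := Finset.card_filter_add_card_filter_not
        (s := Finset.univ.filter (fun c : Fin n → Fin 3 => extQ n c ∈ firstOne n))
        (p := fun c : Fin n → Fin 3 => extQ n c ∈ Eev n ε)
      rw [Finset.filter_filter, Finset.filter_filter] at hsplit
      have e1 : (Finset.univ.filter
          (fun c : Fin n → Fin 3 => extQ n c ∈ firstOne n ∧ extQ n c ∈ Eev n ε)).card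
          = ((Finset.univ.filter (fun c : Fin n → Fin 3 => extQ n c ∈ firstOne n ∩ Eev n ε)).card : ℕ) := by
        exact congrArg Finset.card (Finset.filter_congr (fun c _ => by
          simp [Set.mem_inter_iff]))
      have e2 : (Finset.univ.filter
          (fun c : Fin n → Fin 3 => extQ n c ∈ firstOne n ∧ ¬ (extQ n c ∈ Eev n ε))).card
          = (Fbad n ε).card := by
        rw [Fbad]
        exact congrArg Finset.card (Finset.filter_congr (fun c _ => Iff.rfl))
      rw [e1, e2] at hsplit
      exact hsplit
    have hbad := Fbad_le hε hε8 hn2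
    have h3pos : (0:ℝ) < 3^(n-1) := by positivity
    have haR : (3:ℝ)^(n-1) ≤ ((Finset.univ.filter (fun c : Fin n → Fin 3 => extQ n c ∈ firstOne n)).card : ℝ) := by
      calc (3:ℝ)^(n-1) = ((3^(n-1) : ℕ) : ℝ) := by push_cast; ring
        _ ≤ ((Finset.univ.filter (fun c : Fin n → Fin 3 => extQ n c ∈ firstOne n)).card : ℝ) := by exact_mod_cast haN
    have haRpos : (0:ℝ) < ((Finset.univ.filter (fun c : Fin n → Fin 3 => extQ n c ∈ firstOne n)).card : ℝ) := lt_of_lt_of_le h3pos haR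
    have hgb0 : 0 ≤ gb n := by
      rw [hgbdef]
      positivity
    have hbR : ((Finset.univ.filter (fun c : Fin n → Fin 3 => extQ n c ∈ firstOne n ∩ Eev n ε)).card : ℝ) = ((Finset.univ.filter (fun c : Fin n → Fin 3 => extQ n c ∈ firstOne n)).card : ℝ) - ((Fbad n ε).card : ℝ) := by
      push_cast [← hpart]
      ring
    refine ⟨hcond, ?_, ?_⟩
    · rw [le_div_iff₀ haRpos, hbR]
      have hbadR : ((Fbad n ε).card : ℝ) ≤ gb n * ((Finset.univ.filter (fun c : Fin n → Fin 3 => extQ n c ∈ firstOne n)).card : ℝ) := by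
        calc ((Fbad n ε).card : ℝ) ≤ (3:ℝ)^(n-1)
              * ((3/2)/(ε^2*n) + (1/2)*(1/3)^(Nat.floor (ε*n))) := hbad
          _ = (3:ℝ)^(n-1) * gb n := by rw [hgbdef]
          _ ≤ gb n * ((Finset.univ.filter (fun c : Fin n → Fin 3 => extQ n c ∈ firstOne n)).card : ℝ) := by
            rw [mul_comm ((3:ℝ)^(n-1)) (gb n)]
            exact mul_le_mul_of_nonneg_left haR hgb0
      nlinarith
    · rw [div_le_one haRpos]
      have hle : ((Finset.univ.filter (fun c : Fin n → Fin 3 => extQ n c ∈ firstOne n ∩ Eev n ε)).card : ℕ) ≤ (Finset.univ.filter (fun c : Fin n → Fin 3 => extQ n c ∈ firstOne n)).card := by omega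
      exact_mod_cast hle
  have hgblim : Tendsto gb atTop (nhds 0) := by
    have l1 : Tendsto (fun n : ℕ => (3/2)/(ε^2*n)) atTop (nhds 0) := by
      apply Tendsto.div_atTop tendsto_const_nhds
      exact Tendsto.const_mul_atTop (by positivity) tendsto_natCast_atTop_atTop
    have l2 : Tendsto (fun n : ℕ => (1/2)*(1/3:ℝ)^(J n)) atTop (nhds 0) := by
      have lp : Tendsto (fun k : ℕ => (1/3:ℝ)^k) atTop (nhds 0) :=
        tendsto_pow_atTop_nhds_zero_of_lt_one (by norm_num) (by norm_num)
      have lJ : Tendsto J atTop atTop := by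
        rw [hJdef]
        exact tendsto_nat_floor_atTop.comp hεn
      have h2 := (lp.comp lJ).const_mul (1/2 : ℝ)
      simpa using h2
    rw [hgbdef]
    have := l1.add l2
    simpa using this
  have hr : Tendsto (fun n : ℕ => ((Finset.univ.filter (fun c : Fin n → Fin 3 => extQ n c ∈ firstOne n ∩ Eev n ε)).card : ℝ)/((Finset.univ.filter (fun c : Fin n → Fin 3 => extQ n c ∈ firstOne n)).card : ℝ)) atTop (nhds 1) := by
    apply tendsto_of_tendsto_of_tendsto_of_le_of_le' (g := fun n => 1 - gb n)
      (h := fun _ : ℕ => (1:ℝ))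
    · have h3 := (tendsto_const_nhds (x := (1:ℝ)) (f := (atTop : Filter ℕ))).sub hgblim
      simpa using h3
    · exact tendsto_const_nhds
    · filter_upwards [eventually_ge_atTop 1, hεn.eventually_ge_atTop 2] with n h1 h2
      exact (key n h1 h2).2.1
    · filter_upwards [eventually_ge_atTop 1, hεn.eventually_ge_atTop 2] with n h1 h2
      exact (key n h1 h2).2.2
  have hfin : Tendsto (fun n : ℕ => ENNReal.ofReal (((Finset.univ.filter (fun c : Fin n → Fin 3 => extQ n c ∈ firstOne n ∩ Eev n ε)).card : ℝ)/((Finset.univ.filter (fun c : Fin n → Fin 3 => extQ n c ∈ firstOne n)).card : ℝ))) atTop (nhds 1) := by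
    have h4 := ENNReal.tendsto_ofReal hr
    simpa using h4
  apply hfin.congr'
  filter_upwards [eventually_ge_atTop 1, hεn.eventually_ge_atTop 2] with n h1 h2
  exact ((key n h1 h2).1).symm

end CDG12


/-- with `N(ω)` the number of `a ∈ {1,…,n−1}` with `b̃_{a-1} = 1` and `b̃_a = 1`, for every `ε > 0` the conditional probability `μ((4/18 − ε)n < N < (4/18 + ε)n ∣ F_n) → 1` as `n → ∞`. -/

theorem stmt_12 (μ : Measure (ℕ → ℤ)) (hμ : IsCDGProductMeasure μ) (ε : ℝ) (hε : 0 < ε) :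
    Tendsto (fun n : ℕ =>
      μ[|firstOne n] {ω : ℕ → ℤ |
        (4 / 18 - ε) * n <
          (((Finset.Ico 1 n).filter (fun a =>
            btilde n ω (a - 1) = 1 ∧ btilde n ω a = 1)).card : ℝ) ∧
        (((Finset.Ico 1 n).filter (fun a =>
            btilde n ω (a - 1) = 1 ∧ btilde n ω a = 1)).card : ℝ) <
          (4 / 18 + ε) * n})
      atTop (nhds 1) := by
  show Tendsto (fun n : ℕ => μ[|firstOne n] (CDG12.Eev n ε)) atTop (nhds 1)
  set ε' := min ε (1/8) with hε'def
  have hε' : 0 < ε' := lt_min hε (by norm_num)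
  have hε8 : ε' ≤ 1/8 := min_le_right _ _
  have hεε : ε' ≤ ε := min_le_left _ _
  have hmain := CDG12.main_small hμ hε' hε8
  have hmono : ∀ n : ℕ, μ[|firstOne n] (CDG12.Eev n ε') ≤ μ[|firstOne n] (CDG12.Eev n ε) := by
    intro n
    apply measure_mono
    intro ω hω
    obtain ⟨h1, h2⟩ := hω
    have hn0 : (0:ℝ) ≤ (n:ℝ) := Nat.cast_nonneg n
    constructor
    · refine lt_of_le_of_lt ?_ h1
      apply mul_le_mul_of_nonneg_right _ hn0
      linarith
    · refine lt_of_lt_of_le h2 ?_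
      apply mul_le_mul_of_nonneg_right _ hn0
      linarith
  have hub : ∀ n : ℕ, μ[|firstOne n] (CDG12.Eev n ε) ≤ 1 :=
    fun n => CDG12.cond_le_one (CDG12.firstOne_measurable n)
  exact tendsto_of_tendsto_of_tendsto_of_le_of_le hmain tendsto_const_nhds hmono hub
end

section
/- Let ε > 0 be a real number with 2/18 + ε/2 < 1/8. Then there exists a constant C > 0 such that for every even natural number n ≥ 2, Σ_{(ℓ₁,ℓ₂,ℓ₃,ℓ₄) ∈ R_n} (n/2)! / (ℓ₁!·ℓ₂!·ℓ₃!·ℓ₄!) ≤ C·n³·2^{α(ε)·n}, where R_n = {(ℓ₁,ℓ₂,ℓ₃,ℓ₄) ∈ ℕ⁴ : ℓ₁ + ℓ₂ + ℓ₃ + ℓ₄ = n/2 and ℓ₁ ≤ (2/18 + ε/2)·n} and α(ε) = (1/2)·log₂(1/2) − (2/18 + ε/2)·log₂(2/18 + ε/2) − (7/18 − ε/2)·log₂(7/54 − ε/6). -/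
-- single binomial term ≤ binomial sum
lemma binom_term_le {x y : ℝ} (hx : 0 ≤ x) (hy : 0 ≤ y) (a b : ℕ) :
    ((a + b).choose a : ℝ) * x ^ a * y ^ b ≤ (x + y) ^ (a + b) := by
  rw [add_pow]
  have ha : a ∈ Finset.range (a + b + 1) := by simp
  have := Finset.single_le_sum (f := fun k =>
      x ^ k * y ^ (a + b - k) * ((a + b).choose k : ℝ))
    (fun i _ => by positivity) ha
  simpa [Nat.add_sub_cancel_left, mul_comm, mul_assoc, mul_left_comm] using this

-- factorial identity
lemma fact_ident (a b c d : ℕ) :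
    (a + b + c + d).factorial =
      ((a + b + c + d).choose a) * ((b + c + d).choose b) * ((c + d).choose c) *
        (a.factorial * b.factorial * c.factorial * d.factorial) := by
  have h1 := Nat.choose_mul_factorial_mul_factorial (show a ≤ a + b + c + d by omega)
  have e1 : a + b + c + d - a = b + c + d := by omega
  rw [e1] at h1
  have h2 := Nat.choose_mul_factorial_mul_factorial (show b ≤ b + c + d by omega)
  have e2 : b + c + d - b = c + d := by omega
  rw [e2] at h2
  have h3 := Nat.choose_mul_factorial_mul_factorial (show c ≤ c + d by omega)
  have e3 : c + d - c = d := by omega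
  rw [e3] at h3
  rw [← h1, ← h2, ← h3]; ring

lemma multi_term_le {x y : ℝ} (hx : 0 ≤ x) (hy : 0 ≤ y) (a b c d : ℕ) :
    ((a + b + c + d).factorial : ℝ) /
        (a.factorial * b.factorial * c.factorial * d.factorial) *
      (x ^ a * (y ^ b * y ^ c * y ^ d)) ≤ (x + 3 * y) ^ (a + b + c + d) := by
  have key : ((a + b + c + d).factorial : ℝ) /
        (a.factorial * b.factorial * c.factorial * d.factorial)
      = ((a + b + c + d).choose a : ℝ) * ((b + c + d).choose b) * ((c + d).choose c) := by
    rw [fact_ident a b c d]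
    push_cast
    rw [mul_div_assoc]
    rw [div_self (by positivity), mul_one]
  rw [key]
  have h3 := binom_term_le hy hy c d
  have h2 := binom_term_le hy (show (0:ℝ) ≤ y + y by linarith) b (c + d)
  have h1 := binom_term_le hx (show (0:ℝ) ≤ y + (y + y) by linarith) a (b + (c + d))
  rw [show b + (c + d) = b + c + d from by omega] at h2
  rw [show a + (b + (c + d)) = a + b + c + d from by omega, show b + (c + d) = b + c + d from by omega] at h1
  have e1 : x + 3 * y = x + (y + (y + y)) := by ring
  rw [e1]
  calc ((a + b + c + d).choose a : ℝ) * ((b + c + d).choose b) * ((c + d).choose c) *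
        (x ^ a * (y ^ b * y ^ c * y ^ d))
      = (((a + b + c + d).choose a : ℝ) * x ^ a) * (((b + c + d).choose b : ℝ) * y ^ b) *
        (((c + d).choose c : ℝ) * y ^ c * y ^ d) := by ring
    _ ≤ (((a + b + c + d).choose a : ℝ) * x ^ a) * (((b + c + d).choose b : ℝ) * y ^ b) *
        ((y + y) ^ (c + d)) := by
        apply mul_le_mul_of_nonneg_left h3
        positivity
    _ = (((a + b + c + d).choose a : ℝ) * x ^ a) *
        (((b + c + d).choose b : ℝ) * y ^ b * (y + y) ^ (c + d)) := by ring
    _ ≤ (((a + b + c + d).choose a : ℝ) * x ^ a) * ((y + (y + y)) ^ (b + c + d)) := by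
        apply mul_le_mul_of_nonneg_left h2
        positivity
    _ = ((a + b + c + d).choose a : ℝ) * x ^ a * (y + (y + y)) ^ (b + c + d) := by ring
    _ ≤ (x + (y + (y + y))) ^ (a + b + c + d) := h1

lemma term_bound (p y : ℝ) (hp : 0 < p) (hy : 0 < y) (hpy : p < y) (hps : p + 3 * y = 1 / 2)
    (n a b c d m : ℕ) (hm : a + b + c + d = m) (hn : (n : ℝ) = 2 * m)
    (ha : (a : ℝ) ≤ p * n) :
    ((m.factorial : ℝ) / (a.factorial * b.factorial * c.factorial * d.factorial))
      ≤ (1 / 2 : ℝ) ^ ((n : ℝ) / 2) * (p ^ (-(p * n)) * y ^ (-(3 * y * n))) := by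
  have ham : a ≤ m := by omega
  have hT := multi_term_le hp.le hy.le a b c d
  rw [hm, hps] at hT
  have hyp3 : y ^ b * y ^ c * y ^ d = y ^ (b + c + d) := by
    rw [pow_add, pow_add]
  rw [hyp3] at hT
  have hpos : (0 : ℝ) < p ^ a * y ^ (b + c + d) := by positivity
  have step1 : ((m.factorial : ℝ) / (a.factorial * b.factorial * c.factorial * d.factorial))
      ≤ (1 / 2 : ℝ) ^ m / (p ^ a * y ^ (b + c + d)) := (le_div_iff₀ hpos).mpr hT
  -- convert to rpow form
  have hA : (p : ℝ) ^ (a : ℕ) = p ^ ((a : ℕ) : ℝ) := (Real.rpow_natCast p a).symm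
  have e0 : (1 / 2 : ℝ) ^ ((n : ℝ) / 2) = (1 / 2 : ℝ) ^ m := by
    rw [hn]
    rw [show (2 : ℝ) * (m : ℝ) / 2 = ((m : ℕ) : ℝ) from by ring]
    exact Real.rpow_natCast _ m
  have e1 : (1 / 2 : ℝ) ^ m / (p ^ a * y ^ (b + c + d))
      = (1 / 2 : ℝ) ^ m * (p ^ (-((a : ℕ) : ℝ)) * y ^ (-(((m : ℕ) : ℝ) - a))) := by
    rw [Real.rpow_neg hp.le, Real.rpow_neg hy.le, Real.rpow_natCast]
    rw [show ((m : ℕ) : ℝ) - ((a : ℕ) : ℝ) = (((m - a : ℕ) : ℕ) : ℝ) from by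
      push_cast [Nat.cast_sub ham]; ring]
    rw [Real.rpow_natCast]
    rw [show (b + c + d : ℕ) = m - a from by omega]
    field_simp
  -- compare the exponents
  have hsum : p * (n : ℝ) + 3 * y * n = (m : ℝ) := by
    have h' : p * (n : ℝ) + 3 * y * n = (p + 3 * y) * n := by ring
    rw [h', hps, hn]; ring
  have hu : (0 : ℝ) ≤ p * n - a := by linarith
  have key : p ^ (-((a : ℕ) : ℝ)) * y ^ (-(((m : ℕ) : ℝ) - a))
      ≤ p ^ (-(p * n)) * y ^ (-(3 * y * n)) := by
    have ea : -(p * (n : ℝ)) = (-((a : ℕ) : ℝ)) + (-(p * n - a)) := by ring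
    have eb : -(3 * y * (n : ℝ)) = (-(((m : ℕ) : ℝ) - a)) + (p * n - a) := by linarith
    rw [ea, eb, Real.rpow_add hp, Real.rpow_add hy]
    have h1 : (1 : ℝ) ≤ p ^ (-(p * (n : ℝ) - a)) * y ^ (p * n - a) := by
      have hd : p ^ (-(p * (n : ℝ) - a)) * y ^ (p * n - a) = (y / p) ^ (p * (n : ℝ) - a) := by
        rw [Real.rpow_neg hp.le, Real.div_rpow hy.le hp.le]
        ring
      rw [hd]
      apply Real.one_le_rpow (by rw [le_div_iff₀ hp]; linarith) hu
    calc p ^ (-((a : ℕ) : ℝ)) * y ^ (-(((m : ℕ) : ℝ) - a))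
        = (p ^ (-((a : ℕ) : ℝ)) * y ^ (-(((m : ℕ) : ℝ) - a))) * 1 := by ring
      _ ≤ (p ^ (-((a : ℕ) : ℝ)) * y ^ (-(((m : ℕ) : ℝ) - a))) *
          (p ^ (-(p * (n : ℝ) - a)) * y ^ (p * n - a)) := by
          apply mul_le_mul_of_nonneg_left h1
          positivity
      _ = p ^ (-((a : ℕ) : ℝ)) * p ^ (-(p * (n : ℝ) - a)) *
          (y ^ (-(((m : ℕ) : ℝ) - a)) * y ^ (p * n - a)) := by ring
  calc ((m.factorial : ℝ) / (a.factorial * b.factorial * c.factorial * d.factorial))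
      ≤ (1 / 2 : ℝ) ^ m / (p ^ a * y ^ (b + c + d)) := step1
    _ = (1 / 2 : ℝ) ^ m * (p ^ (-((a : ℕ) : ℝ)) * y ^ (-(((m : ℕ) : ℝ) - a))) := e1
    _ ≤ (1 / 2 : ℝ) ^ m * (p ^ (-(p * n)) * y ^ (-(3 * y * n))) := by
        apply mul_le_mul_of_nonneg_left key
        positivity
    _ = (1 / 2 : ℝ) ^ ((n : ℝ) / 2) * (p ^ (-(p * n)) * y ^ (-(3 * y * n))) := by rw [e0]

lemma rhs_eq (p y : ℝ) (hp : 0 < p) (hy : 0 < y) (n : ℕ) :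
    (2 : ℝ) ^ (((1 / 2) * (Real.log (1 / 2) / Real.log 2) - p * (Real.log p / Real.log 2)
        - (3 * y) * (Real.log y / Real.log 2)) * n)
      = (1 / 2 : ℝ) ^ ((n : ℝ) / 2) * (p ^ (-(p * n)) * y ^ (-(3 * y * n))) := by
  have hl2 : Real.log 2 ≠ 0 := ne_of_gt (Real.log_pos (by norm_num))
  rw [Real.rpow_def_of_pos (by norm_num : (0:ℝ) < 2),
      Real.rpow_def_of_pos (by norm_num : (0:ℝ) < 1/2),
      Real.rpow_def_of_pos hp, Real.rpow_def_of_pos hy,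
      ← Real.exp_add, ← Real.exp_add]
  congr 1
  field_simp
  ring

/-- for real `ε > 0` with `2/18 + ε/2 < 1/8`, there is a constant `C > 0`
such that for every even `n ≥ 2`,
`∑_{(ℓ₁,ℓ₂,ℓ₃,ℓ₄) ∈ R_n} (n/2)!/(ℓ₁!ℓ₂!ℓ₃!ℓ₄!) ≤ C · n³ · 2^(α(ε)·n)`, where
`R_n = {ℓ ∈ ℕ⁴ : ℓ₁+ℓ₂+ℓ₃+ℓ₄ = n/2, ℓ₁ ≤ (2/18+ε/2)n}` and
`α(ε) = (1/2)log₂(1/2) − (2/18+ε/2)log₂(2/18+ε/2) − (7/18−ε/2)log₂(7/54−ε/6)`. -/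
theorem stmt_19 (ε : ℝ) (hε : 0 < ε) (hε' : 2 / 18 + ε / 2 < 1 / 8) :
    ∃ C : ℝ, 0 < C ∧ ∀ n : ℕ, 2 ≤ n → Even n →
      (∑ l ∈ (Finset.range (n / 2 + 1) ×ˢ Finset.range (n / 2 + 1) ×ˢ
          Finset.range (n / 2 + 1) ×ˢ Finset.range (n / 2 + 1)).filter
            (fun l : ℕ × ℕ × ℕ × ℕ => l.1 + l.2.1 + l.2.2.1 + l.2.2.2 = n / 2 ∧
              (l.1 : ℝ) ≤ (2 / 18 + ε / 2) * n),
        ((n / 2).factorial : ℝ) /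
          (l.1.factorial * l.2.1.factorial * l.2.2.1.factorial * l.2.2.2.factorial))
      ≤ C * n ^ 3 *
        (2 : ℝ) ^ (((1 / 2) * (Real.log (1 / 2) / Real.log 2)
          - (2 / 18 + ε / 2) * (Real.log (2 / 18 + ε / 2) / Real.log 2)
          - (7 / 18 - ε / 2) * (Real.log (7 / 54 - ε / 6) / Real.log 2)) * n) := by
  refine ⟨1, one_pos, fun n hn2 hne => ?_⟩
  set p : ℝ := 2 / 18 + ε / 2 with hpdef
  set y : ℝ := 7 / 54 - ε / 6 with hydef
  have hε36 : ε < 1 / 36 := by rw [hpdef] at hε'; linarith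
  have hp : 0 < p := by rw [hpdef]; linarith
  have hy : 0 < y := by rw [hydef]; linarith
  have hpy : p < y := by rw [hpdef, hydef]; linarith
  have hps : p + 3 * y = 1 / 2 := by rw [hpdef, hydef]; ring
  have h3y : (7 : ℝ) / 18 - ε / 2 = 3 * y := by rw [hydef]; ring
  rw [h3y, rhs_eq p y hp hy n]
  have hn : (n : ℝ) = 2 * ((n / 2 : ℕ) : ℝ) := by
    obtain ⟨k, hk⟩ := hne
    have : n / 2 = k := by omega
    rw [this, hk]; push_cast; ring
  set B : ℝ := (1 / 2 : ℝ) ^ ((n : ℝ) / 2) * (p ^ (-(p * n)) * y ^ (-(3 * y * n))) with hBdef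
  have hB : 0 ≤ B := by
    rw [hBdef]
    have := Real.rpow_nonneg (by norm_num : (0:ℝ) ≤ 1/2) ((n : ℝ) / 2)
    have := Real.rpow_nonneg hp.le (-(p * n))
    have := Real.rpow_nonneg hy.le (-(3 * y * n))
    positivity
  set S := (Finset.range (n / 2 + 1) ×ˢ Finset.range (n / 2 + 1) ×ˢ
      Finset.range (n / 2 + 1) ×ˢ Finset.range (n / 2 + 1)).filter
        (fun l : ℕ × ℕ × ℕ × ℕ => l.1 + l.2.1 + l.2.2.1 + l.2.2.2 = n / 2 ∧
          (l.1 : ℝ) ≤ p * n) with hSdef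
  -- cardinality bound
  have hcard : S.card ≤ n ^ 3 := by
    have hinj : S.card ≤ ((Finset.range (n / 2 + 1) ×ˢ Finset.range (n / 2 + 1) ×ˢ
        Finset.range (n / 2 + 1)) : Finset (ℕ × ℕ × ℕ)).card := by
      apply Finset.card_le_card_of_injOn (fun l => (l.1, l.2.1, l.2.2.1))
      · intro l hl
        rw [hSdef, Finset.mem_coe, Finset.mem_filter, Finset.mem_product, Finset.mem_product,
          Finset.mem_product] at hl
        simp only [Finset.mem_coe, Finset.mem_product]
        exact ⟨hl.1.1, hl.1.2.1, hl.1.2.2.1⟩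
      · intro l1 h1 l2 h2 heq
        simp only [Finset.mem_coe] at h1 h2
        rw [hSdef, Finset.mem_filter] at h1 h2
        have e1 := h1.2.1
        have e2 := h2.2.1
        simp only [Prod.mk.injEq] at heq
        obtain ⟨q1, q2, q3⟩ := heq
        have : l1.2.2.2 = l2.2.2.2 := by omega
        exact Prod.ext q1 (Prod.ext q2 (Prod.ext q3 this))
    have : ((Finset.range (n / 2 + 1) ×ˢ Finset.range (n / 2 + 1) ×ˢ
        Finset.range (n / 2 + 1)) : Finset (ℕ × ℕ × ℕ)).card = (n / 2 + 1) ^ 3 := by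
      simp [Finset.card_product]; ring
    rw [this] at hinj
    calc S.card ≤ (n / 2 + 1) ^ 3 := hinj
      _ ≤ n ^ 3 := Nat.pow_le_pow_left (by omega) 3
  -- per-term bound
  have hterm : ∀ l ∈ S, ((n / 2).factorial : ℝ) /
      (l.1.factorial * l.2.1.factorial * l.2.2.1.factorial * l.2.2.2.factorial) ≤ B := by
    intro l hl
    rw [hSdef, Finset.mem_filter] at hl
    exact term_bound p y hp hy hpy hps n l.1 l.2.1 l.2.2.1 l.2.2.2 (n / 2)
      hl.2.1 hn hl.2.2
  calc (∑ l ∈ S, ((n / 2).factorial : ℝ) /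
        (l.1.factorial * l.2.1.factorial * l.2.2.1.factorial * l.2.2.2.factorial))
      ≤ S.card • B := Finset.sum_le_card_nsmul S _ B hterm
    _ = (S.card : ℝ) * B := nsmul_eq_mul _ _
    _ ≤ (n ^ 3 : ℝ) * B := by
        apply mul_le_mul_of_nonneg_right _ hB
        exact_mod_cast hcard
    _ = 1 * n ^ 3 * B := by ring
end
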